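/- arXiv:0803.3867 — 6 statements merged into one kernel-verified Lean document; each statement's English description precedes it below -/
import Mathlib

section
/- Let H be a complex Hilbert space and let ∘ : E(H) × E(H) → E(H) satisfy the duality condition: A∘ρ is trace-class and Tr((A∘ρ)B) = Tr(ρ(A∘B)) for all ρ ∈ D(H) and A,B ∈ E(H). Then for all A,B ∈ E(H) and all λ ∈ [0,1], A∘(λB) = λ(A∘B). -/
/-!
Common setup: effects, density operators, trace, square roots and the strong
operator topology on a complex Hilbert space `H`, together with the five
conditions (duality, unit, weak associativity, continuity, purity) defining a
sequential product on the set `E(H)` of quantum effects.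
-/

set_option maxHeartbeats 1000000
set_option synthInstance.maxHeartbeats 1000000

open scoped InnerProductSpace ComplexOrder
open Filter

noncomputable section

variable (H : Type*) [NormedAddCommGroup H] [InnerProductSpace ℂ H] [CompleteSpace H]

/-- The index set of a fixed Hilbert basis of `H`. -/
def stdIdx : Set H := (exists_hilbertBasis ℂ H).choose

/-- A fixed Hilbert basis of `H`. -/
def stdBasis : HilbertBasis (stdIdx H) ℂ H := (exists_hilbertBasis ℂ H).choose_spec.choose

variable {H}

/-- The positive square root `A^{1/2}` of a (positive) operator `A`. -/
def sqrtOp (A : H →L[ℂ] H) : H →L[ℂ] H := CFC.sqrt A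

/-- The trace of an operator, computed in the fixed Hilbert basis. -/
def traceOp (T : H →L[ℂ] H) : ℂ := ∑' i, ⟪(stdBasis H i : H), T (stdBasis H i)⟫_ℂ

/-- `T` is trace-class: `|T| = (T*T)^{1/2}` has finite trace. -/
def IsTraceClass (T : H →L[ℂ] H) : Prop :=
  Summable fun i => ⟪(stdBasis H i : H), sqrtOp (star T * T) (stdBasis H i)⟫_ℂ

/-- A quantum effect: an operator `A` with `0 ≤ A ≤ 1` in the Loewner order (in
particular `A` is bounded and self-adjoint).  `E(H)` is the set of effects. -/
def IsEffect (A : H →L[ℂ] H) : Prop := 0 ≤ A ∧ A ≤ 1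

/-- A density operator: a positive trace-class operator of unit trace.
`D(H)` is the set of density operators. -/
def IsDensity (ρ : H →L[ℂ] H) : Prop := 0 ≤ ρ ∧ IsTraceClass ρ ∧ traceOp ρ = 1

variable (H) in
/-- The strong operator topology on bounded operators: the topology of pointwise
convergence (as maps into `H` with its norm topology). -/
def sot : TopologicalSpace (H →L[ℂ] H) :=
  TopologicalSpace.induced (fun T => (T : H → H)) inferInstance

/-- `p` is a rank-one orthogonal projection. -/
def IsRankOneProjection (p : H →L[ℂ] H) : Prop :=
  IsIdempotentElem p ∧ IsSelfAdjoint p ∧ LinearMap.rank (p : H →ₗ[ℂ] H) = 1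

/-- `P_ψ`: the rank-one orthogonal projection onto the span of a unit vector `ψ`,
`x ↦ ⟪ψ, x⟫ • ψ`. -/
def projVec (ψ : H) : H →L[ℂ] H := (innerSL ℂ ψ).smulRight ψ

/-- `op` is a binary operation on `E(H)`: it maps pairs of effects to effects. -/
def EffectClosed (op : (H →L[ℂ] H) → (H →L[ℂ] H) → (H →L[ℂ] H)) : Prop :=
  ∀ A B, IsEffect A → IsEffect B → IsEffect (op A B)

/-- Condition 1 (Duality): for all effects `A, B` and densities `ρ`, the operator
`A ∘ ρ` is trace-class and `Tr((A∘ρ)B) = Tr(ρ(A∘B))`. -/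
def DualityCond (op : (H →L[ℂ] H) → (H →L[ℂ] H) → (H →L[ℂ] H)) : Prop :=
  ∀ A B ρ : H →L[ℂ] H, IsEffect A → IsEffect B → IsDensity ρ →
    IsTraceClass (op A ρ) ∧ traceOp (op A ρ * B) = traceOp (ρ * op A B)

/-- Condition 2 (Unit): `A ∘ I = I ∘ A = A` for every effect `A`. -/
def UnitCond (op : (H →L[ℂ] H) → (H →L[ℂ] H) → (H →L[ℂ] H)) : Prop :=
  ∀ A : H →L[ℂ] H, IsEffect A → op A 1 = A ∧ op 1 A = A

/-- Condition 3 (Weak associativity): `A² ∘ B = A ∘ (A ∘ B)` for all effects `A, B`. -/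
def WeakAssocCond (op : (H →L[ℂ] H) → (H →L[ℂ] H) → (H →L[ℂ] H)) : Prop :=
  ∀ A B : H →L[ℂ] H, IsEffect A → IsEffect B → op (A * A) B = op A (op A B)

/-- Condition 4 (Continuity): for each fixed effect `B`, the map `A ↦ A ∘ B` is
continuous on `E(H)` for the strong operator topology. -/
def ContinuityCond (op : (H →L[ℂ] H) → (H →L[ℂ] H) → (H →L[ℂ] H)) : Prop :=
  ∀ B : H →L[ℂ] H, IsEffect B →
    @ContinuousOn _ _ (sot H) (sot H) (fun A => op A B) {A | IsEffect A}

/-- Condition 5 (Purity): for every effect `A` and every rank-one orthogonal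
projection `p`, the operator `A ∘ p` has rank at most `1`. -/
def PurityCond (op : (H →L[ℂ] H) → (H →L[ℂ] H) → (H →L[ℂ] H)) : Prop :=
  ∀ A p : H →L[ℂ] H, IsEffect A → IsRankOneProjection p →
    LinearMap.rank ((op A p) : H →ₗ[ℂ] H) ≤ 1

section Aux

set_option linter.unusedSectionVars false

variable {H : Type*} [NormedAddCommGroup H] [InnerProductSpace ℂ H] [CompleteSpace H]

lemma projVec_apply (ψ x : H) : projVec ψ x = ⟪ψ, x⟫_ℂ • ψ := rfl

lemma traceOp_projVec_mul (ψ : H) (M : H →L[ℂ] H) :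
    traceOp (projVec ψ * M) = ⟪ψ, M ψ⟫_ℂ := by
  unfold traceOp
  have h : ∀ i : stdIdx H, ⟪(stdBasis H i : H), (projVec ψ * M) (stdBasis H i)⟫_ℂ
      = ⟪(ContinuousLinearMap.adjoint M) ψ, (stdBasis H i : H)⟫_ℂ
        * ⟪(stdBasis H i : H), ψ⟫_ℂ := by
    intro i
    rw [ContinuousLinearMap.mul_apply, projVec_apply, inner_smul_right,
      ContinuousLinearMap.adjoint_inner_left]
  rw [tsum_congr h, (stdBasis H).tsum_inner_mul_inner,
    ContinuousLinearMap.adjoint_inner_left]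

lemma traceOp_smul (c : ℂ) (T : H →L[ℂ] H) : traceOp (c • T) = c * traceOp T := by
  unfold traceOp
  rw [← tsum_mul_left]
  exact tsum_congr fun i => by simp [inner_smul_right]

lemma isSelfAdjoint_projVec (ψ : H) : IsSelfAdjoint (projVec ψ) := by
  rw [ContinuousLinearMap.isSelfAdjoint_iff_isSymmetric]
  intro x y
  simp only [ContinuousLinearMap.coe_coe, projVec_apply, inner_smul_left, inner_smul_right,
    inner_conj_symm]
  ring

lemma isPositive_projVec (ψ : H) : (projVec ψ).IsPositive := by
  refine ⟨ContinuousLinearMap.isSelfAdjoint_iff_isSymmetric.mp (isSelfAdjoint_projVec ψ), fun x => ?_⟩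
  rw [ContinuousLinearMap.reApplyInnerSelf_apply, projVec_apply, inner_smul_left,
    RCLike.conj_mul, ← RCLike.ofReal_pow, RCLike.ofReal_re]
  positivity

lemma projVec_mul_self (ψ : H) (hψ : ‖ψ‖ = 1) : projVec ψ * projVec ψ = projVec ψ := by
  have h : ⟪ψ, ψ⟫_ℂ = 1 := by
    rw [inner_self_eq_norm_sq_to_K, hψ]; norm_num
  ext x
  simp [ContinuousLinearMap.mul_apply, projVec_apply, inner_smul_right, h, hψ]

lemma isDensity_projVec (ψ : H) (hψ : ‖ψ‖ = 1) : IsDensity (projVec ψ) := by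
  have hone : ⟪ψ, ψ⟫_ℂ = 1 := by
    rw [inner_self_eq_norm_sq_to_K, hψ]; norm_num
  have hpos : (0 : H →L[ℂ] H) ≤ projVec ψ :=
    (ContinuousLinearMap.nonneg_iff_isPositive _).mpr (isPositive_projVec ψ)
  have hsq : sqrtOp (star (projVec ψ) * projVec ψ) = projVec ψ := by
    unfold sqrtOp
    rw [(isSelfAdjoint_projVec ψ).star_eq, projVec_mul_self ψ hψ]
    exact CFC.sqrt_unique (projVec_mul_self ψ hψ) hpos
  refine ⟨hpos, ?_, ?_⟩
  · unfold IsTraceClass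
    rw [hsq]
    refine ((stdBasis H).summable_inner_mul_inner ψ ψ).congr fun i => ?_
    rw [projVec_apply, inner_smul_right]
  · unfold traceOp
    have h : ∀ i : stdIdx H, ⟪(stdBasis H i : H), projVec ψ (stdBasis H i)⟫_ℂ
        = ⟪ψ, (stdBasis H i : H)⟫_ℂ * ⟪(stdBasis H i : H), ψ⟫_ℂ := fun i => by
      rw [projVec_apply, inner_smul_right]
    rw [tsum_congr h, (stdBasis H).tsum_inner_mul_inner, hone]

lemma re_ofReal_mul' (r : ℝ) (z : ℂ) :
    RCLike.re ((r : ℂ) * z) = r * RCLike.re z :=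
  Complex.re_ofReal_mul r z

lemma isEffect_smul {B : H →L[ℂ] H} (hB : IsEffect B) {l : ℝ}
    (hl : l ∈ Set.Icc (0 : ℝ) 1) : IsEffect ((l : ℂ) • B) := by
  have hpos : B.IsPositive := (ContinuousLinearMap.nonneg_iff_isPositive _).mp hB.1
  have hsal : IsSelfAdjoint ((l : ℂ) • B) := by
    rw [IsSelfAdjoint, star_smul, hpos.isSelfAdjoint.star_eq, RCLike.star_def,
      Complex.conj_ofReal]
  have hle : (1 - B).IsPositive := by
    rw [← ContinuousLinearMap.nonneg_iff_isPositive, sub_nonneg]; exact hB.2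
  constructor
  · rw [ContinuousLinearMap.nonneg_iff_isPositive]
    refine ⟨ContinuousLinearMap.isSelfAdjoint_iff_isSymmetric.mp hsal, fun x => ?_⟩
    rw [ContinuousLinearMap.reApplyInnerSelf_apply, ContinuousLinearMap.smul_apply,
      inner_smul_left, Complex.conj_ofReal, re_ofReal_mul']
    exact mul_nonneg hl.1 (hpos.2 x)
  · rw [ContinuousLinearMap.le_def]
    refine ⟨ContinuousLinearMap.isSelfAdjoint_iff_isSymmetric.mp ((IsSelfAdjoint.one (R := H →L[ℂ] H)).sub hsal), fun x => ?_⟩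
    have h2 := hle.2 x
    rw [ContinuousLinearMap.reApplyInnerSelf_apply, ContinuousLinearMap.sub_apply,
      ContinuousLinearMap.one_apply, inner_sub_left, map_sub] at h2
    have h3 := hpos.2 x
    rw [ContinuousLinearMap.reApplyInnerSelf_apply] at h3
    rw [ContinuousLinearMap.reApplyInnerSelf_apply, ContinuousLinearMap.sub_apply,
      ContinuousLinearMap.one_apply, ContinuousLinearMap.smul_apply, inner_sub_left,
      inner_smul_left, Complex.conj_ofReal, map_sub, re_ofReal_mul']
    nlinarith [hl.1, hl.2]

lemma clm_ext_of_inner_unit {T S : H →L[ℂ] H}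
    (h : ∀ ψ : H, ‖ψ‖ = 1 → ⟪ψ, T ψ⟫_ℂ = ⟪ψ, S ψ⟫_ℂ) : T = S := by
  apply ContinuousLinearMap.coe_injective
  rw [← ext_inner_map]
  intro x
  rcases eq_or_ne x 0 with rfl | hx
  · simp
  · have hnx : ‖x‖ ≠ 0 := norm_ne_zero_iff.mpr hx
    have hc : ((‖x‖ : ℂ))⁻¹ ≠ 0 := by
      simp [hnx]
    have hψ : ‖((‖x‖ : ℂ))⁻¹ • x‖ = 1 := by
      rw [norm_smul, norm_inv, Complex.norm_real, Real.norm_eq_abs,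
        abs_of_nonneg (norm_nonneg x), inv_mul_cancel₀ hnx]
    have h2 := h _ hψ
    simp only [map_smul, inner_smul_left, inner_smul_right] at h2
    have hc' : (starRingEnd ℂ) (((‖x‖ : ℂ))⁻¹) ≠ 0 := by
      simpa using hc
    have h4 := mul_left_cancel₀ hc' (mul_left_cancel₀ hc h2)
    simp only [ContinuousLinearMap.coe_coe]
    rw [← inner_conj_symm, h4, inner_conj_symm]

end Aux

/-- If `∘ : E(H) × E(H) → E(H)` satisfies the duality condition, then
`A ∘ (λB) = λ(A ∘ B)` for all effects `A, B` and all `λ ∈ [0,1]`. -/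
theorem duality_implies_homogeneous
    (op : (H →L[ℂ] H) → (H →L[ℂ] H) → (H →L[ℂ] H)) (hmap : EffectClosed op)
    (hdual : DualityCond op) :
    ∀ A B : H →L[ℂ] H, IsEffect A → IsEffect B →
      ∀ l : ℝ, l ∈ Set.Icc (0 : ℝ) 1 →
        op A ((l : ℂ) • B) = (l : ℂ) • op A B := by
  intro A B hA hB l hl
  have hlB : IsEffect ((l : ℂ) • B) := isEffect_smul hB hl
  apply clm_ext_of_inner_unit
  intro ψ hψ
  have hd : IsDensity (projVec ψ) := isDensity_projVec ψ hψ
  have h1 := (hdual A ((l : ℂ) • B) (projVec ψ) hA hlB hd).2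
  have h2 := (hdual A B (projVec ψ) hA hB hd).2
  calc ⟪ψ, op A ((l : ℂ) • B) ψ⟫_ℂ
      = traceOp (projVec ψ * op A ((l : ℂ) • B)) := (traceOp_projVec_mul ψ _).symm
    _ = traceOp (op A (projVec ψ) * ((l : ℂ) • B)) := h1.symm
    _ = traceOp ((l : ℂ) • (op A (projVec ψ) * B)) := by rw [mul_smul_comm]
    _ = (l : ℂ) * traceOp (op A (projVec ψ) * B) := traceOp_smul _ _
    _ = (l : ℂ) * traceOp (projVec ψ * op A B) := by rw [h2]
    _ = (l : ℂ) * ⟪ψ, (op A B) ψ⟫_ℂ := by rw [traceOp_projVec_mul]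
    _ = ⟪ψ, ((l : ℂ) • op A B) ψ⟫_ℂ := by
        rw [ContinuousLinearMap.smul_apply, inner_smul_right]

end
end

section
/- Let H be a complex Hilbert space and let ∘ : E(H) × E(H) → E(H) satisfy the duality condition: A∘ρ is trace-class and Tr((A∘ρ)B) = Tr(ρ(A∘B)) for all ρ ∈ D(H) and A,B ∈ E(H). Then for all A,B,C ∈ E(H) such that B + C ∈ E(H), one has A∘(B+C) = A∘B + A∘C. -/
/-!
Common setup: effects, density operators, trace, square roots and the strong
operator topology on a complex Hilbert space `H`, together with the five
conditions (duality, unit, weak associativity, continuity, purity) defining a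
sequential product on the set `E(H)` of quantum effects.
-/

set_option maxHeartbeats 1000000
set_option synthInstance.maxHeartbeats 1000000

open scoped InnerProductSpace ComplexOrder
open Filter

noncomputable section

variable (H : Type*) [NormedAddCommGroup H] [InnerProductSpace ℂ H] [CompleteSpace H]

variable {H}

section AuxProofs

open ContinuousLinearMap in
lemma aux_parseval_hasSum (x : H) :
    HasSum (fun i => ‖⟪(stdBasis H i : H), x⟫_ℂ‖ ^ 2) (‖x‖ ^ 2) := by
  have h := (stdBasis H).hasSum_inner_mul_inner x x
  have h2 : HasSum (fun i => ((‖⟪(stdBasis H i : H), x⟫_ℂ‖ ^ 2 : ℝ) : ℂ))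
      ((‖x‖ ^ 2 : ℝ) : ℂ) := by
    have e1 : (fun i => ((‖⟪(stdBasis H i : H), x⟫_ℂ‖ ^ 2 : ℝ) : ℂ)) =
        fun i => ⟪x, (stdBasis H i : H)⟫_ℂ * ⟪(stdBasis H i : H), x⟫_ℂ := by
      funext i
      rw [show ⟪x, (stdBasis H i : H)⟫_ℂ
          = (starRingEnd ℂ) ⟪(stdBasis H i : H), x⟫_ℂ from (inner_conj_symm _ _).symm,
        RCLike.conj_mul]
      push_cast
      rfl
    have e2 : ((‖x‖ ^ 2 : ℝ) : ℂ) = ⟪x, x⟫_ℂ := by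
      rw [inner_self_eq_norm_sq_to_K]
      push_cast
      rfl
    rw [e1, e2]; exact h
  exact Complex.hasSum_ofReal.mp h2

open scoped NNReal ENNReal in
lemma aux_parseval_ennreal (x : H) :
    ∑' i, (‖⟪(stdBasis H i : H), x⟫_ℂ‖₊ : ℝ≥0∞) ^ 2 = (‖x‖₊ : ℝ≥0∞) ^ 2 := by
  have h : HasSum (fun i => (‖⟪(stdBasis H i : H), x⟫_ℂ‖₊ ^ 2 : ℝ≥0)) (‖x‖₊ ^ 2) := by
    apply NNReal.hasSum_coe.mp
    have := aux_parseval_hasSum x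
    refine (this.congr_fun fun i => ?_) -- adjust casts
    push_cast
    ring
  calc ∑' i, (‖⟪(stdBasis H i : H), x⟫_ℂ‖₊ : ℝ≥0∞) ^ 2
      = ∑' i, ((‖⟪(stdBasis H i : H), x⟫_ℂ‖₊ ^ 2 : ℝ≥0) : ℝ≥0∞) := by
        simp [ENNReal.coe_pow]
    _ = ((‖x‖₊ ^ 2 : ℝ≥0) : ℝ≥0∞) := ENNReal.tsum_coe_eq h
    _ = (‖x‖₊ : ℝ≥0∞) ^ 2 := by simp [ENNReal.coe_pow]

open scoped NNReal ENNReal in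
open ContinuousLinearMap in
lemma aux_summable_sq_of_adjoint (T : H →L[ℂ] H)
    (h : Summable fun j => ‖adjoint T (stdBasis H j : H)‖ ^ 2) :
    Summable fun i => ‖T (stdBasis H i : H)‖ ^ 2 := by
  have hnn : Summable fun j => (‖adjoint T (stdBasis H j : H)‖₊ ^ 2 : ℝ≥0) := by
    apply NNReal.summable_coe.mp
    refine h.congr fun j => ?_
    push_cast
    ring
  have key : ∑' i, (‖T (stdBasis H i : H)‖₊ : ℝ≥0∞) ^ 2
      = ∑' j, (‖adjoint T (stdBasis H j : H)‖₊ : ℝ≥0∞) ^ 2 := by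
    calc ∑' i, (‖T (stdBasis H i : H)‖₊ : ℝ≥0∞) ^ 2
        = ∑' i, ∑' j, (‖⟪(stdBasis H j : H), T (stdBasis H i : H)⟫_ℂ‖₊ : ℝ≥0∞) ^ 2 :=
          tsum_congr fun i => (aux_parseval_ennreal _).symm
      _ = ∑' j, ∑' i, (‖⟪(stdBasis H j : H), T (stdBasis H i : H)⟫_ℂ‖₊ : ℝ≥0∞) ^ 2 :=
          ENNReal.tsum_comm
      _ = ∑' j, (‖adjoint T (stdBasis H j : H)‖₊ : ℝ≥0∞) ^ 2 := by
          refine tsum_congr fun j => ?_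
          rw [← aux_parseval_ennreal (adjoint T (stdBasis H j : H))]
          refine tsum_congr fun i => ?_
          have hn : ‖⟪(stdBasis H i : H), adjoint T (stdBasis H j : H)⟫_ℂ‖₊
              = ‖⟪(stdBasis H j : H), T (stdBasis H i : H)⟫_ℂ‖₊ := by
            apply NNReal.coe_injective
            push_cast
            rw [norm_inner_symm, adjoint_inner_left]
          rw [hn]
  have hfin : (∑' i, ((‖T (stdBasis H i : H)‖₊ ^ 2 : ℝ≥0) : ℝ≥0∞)) ≠ ⊤ := by
    have e : (∑' i, ((‖T (stdBasis H i : H)‖₊ ^ 2 : ℝ≥0) : ℝ≥0∞))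
        = ∑' j, ((‖adjoint T (stdBasis H j : H)‖₊ ^ 2 : ℝ≥0) : ℝ≥0∞) := by
      simpa [ENNReal.coe_pow] using key
    rw [e]
    exact ENNReal.tsum_coe_ne_top_iff_summable.mpr hnn
  have hs : Summable fun i => (‖T (stdBasis H i : H)‖₊ ^ 2 : ℝ≥0) :=
    ENNReal.tsum_coe_ne_top_iff_summable.mp hfin
  have := NNReal.summable_coe.mpr hs
  exact this.congr fun i => by push_cast; ring

open ContinuousLinearMap in
lemma aux_summable_diag (D X : H →L[ℂ] H) (hD : 0 ≤ D) (hDtc : IsTraceClass D) :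
    Summable fun i => ⟪(stdBasis H i : H), (D * X) (stdBasis H i : H)⟫_ℂ := by
  have hDsa : IsSelfAdjoint D := .of_nonneg hD
  set S := CFC.sqrt D with hSdef
  have hS0 : 0 ≤ S := CFC.sqrt_nonneg (a := D)
  have hSsa : IsSelfAdjoint S := .of_nonneg hS0
  have hSS : S * S = D := CFC.sqrt_mul_sqrt_self D hD
  have hmove : ∀ x y : H, ⟪x, D y⟫_ℂ = ⟪S x, S y⟫_ℂ := by
    intro x y
    conv_lhs => rw [← hSS]
    rw [show (S * S) y = S (S y) from rfl, ← adjoint_inner_left, hSsa.adjoint_eq]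
  have h1 : Summable fun i => ⟪(stdBasis H i : H), D (stdBasis H i : H)⟫_ℂ := by
    have h := hDtc
    unfold IsTraceClass at h
    rwa [show sqrtOp (star D * D) = D by
      rw [sqrtOp, hDsa.star_eq, CFC.sqrt_mul_self D hD]] at h
  have h2 : Summable fun i => ‖S (stdBasis H i : H)‖ ^ 2 := by
    have hre := h1.map Complex.reCLM Complex.reCLM.continuous
    refine hre.congr fun i => ?_
    show Complex.re ⟪(stdBasis H i : H), D (stdBasis H i : H)⟫_ℂ
        = ‖S (stdBasis H i : H)‖ ^ 2
    rw [hmove]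
    simpa using inner_self_eq_norm_sq (𝕜 := ℂ) (S (stdBasis H i : H))
  have h3 : Summable fun i => ‖(S * X) (stdBasis H i : H)‖ ^ 2 := by
    apply aux_summable_sq_of_adjoint
    have hadj : adjoint (S * X) = adjoint X * S := by
      rw [← star_eq_adjoint, star_mul, star_eq_adjoint, star_eq_adjoint, hSsa.adjoint_eq]
    rw [hadj]
    refine Summable.of_nonneg_of_le (fun j => by positivity) (fun j => ?_)
      (h2.mul_left (‖adjoint X‖ ^ 2))
    have hb : ‖(adjoint X * S) (stdBasis H j : H)‖ ≤ ‖adjoint X‖ * ‖S (stdBasis H j : H)‖ :=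
      (adjoint X).le_opNorm _
    calc ‖(adjoint X * S) (stdBasis H j : H)‖ ^ 2
        ≤ (‖adjoint X‖ * ‖S (stdBasis H j : H)‖) ^ 2 := by
          exact pow_le_pow_left₀ (norm_nonneg _) hb 2
      _ = ‖adjoint X‖ ^ 2 * ‖S (stdBasis H j : H)‖ ^ 2 := mul_pow _ _ 2
  refine Summable.of_norm_bounded ((h2.add h3).div_const 2) fun i => ?_
  have heq : ⟪(stdBasis H i : H), (D * X) (stdBasis H i : H)⟫_ℂ
      = ⟪S (stdBasis H i : H), (S * X) (stdBasis H i : H)⟫_ℂ := by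
    show ⟪(stdBasis H i : H), D (X (stdBasis H i : H))⟫_ℂ
        = ⟪S (stdBasis H i : H), S (X (stdBasis H i : H))⟫_ℂ
    exact hmove _ _
  rw [heq]
  have hcs := norm_inner_le_norm (𝕜 := ℂ) (S (stdBasis H i : H)) ((S * X) (stdBasis H i : H))
  nlinarith [sq_nonneg (‖S (stdBasis H i : H)‖ - ‖(S * X) (stdBasis H i : H)‖),
    norm_nonneg (S (stdBasis H i : H)), norm_nonneg ((S * X) (stdBasis H i : H)),
    norm_nonneg (⟪S (stdBasis H i : H), (S * X) (stdBasis H i : H)⟫_ℂ)]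

open ContinuousLinearMap in
lemma aux_projVec_apply (u x : H) : projVec u x = ⟪u, x⟫_ℂ • u := rfl

open ContinuousLinearMap in
lemma aux_traceOp_projVec_mul (u : H) (S : H →L[ℂ] H) :
    traceOp (projVec u * S) = ⟪u, S u⟫_ℂ := by
  have e : ∀ i : stdIdx H, ⟪(stdBasis H i : H), (projVec u * S) (stdBasis H i : H)⟫_ℂ
      = ⟪adjoint S u, (stdBasis H i : H)⟫_ℂ * ⟪(stdBasis H i : H), u⟫_ℂ := by
    intro i
    show ⟪(stdBasis H i : H), ⟪u, S (stdBasis H i : H)⟫_ℂ • u⟫_ℂ = _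
    rw [inner_smul_right, adjoint_inner_left]
  rw [traceOp, tsum_congr e, (stdBasis H).tsum_inner_mul_inner, adjoint_inner_left]

open ContinuousLinearMap in
lemma aux_projVec_selfAdjoint (u : H) : IsSelfAdjoint (projVec u) := by
  rw [isSelfAdjoint_iff_isSymmetric]
  intro x y
  show ⟪⟪u, x⟫_ℂ • u, y⟫_ℂ = ⟪x, ⟪u, y⟫_ℂ • u⟫_ℂ
  rw [inner_smul_left, inner_smul_right, inner_conj_symm]
  ring

open ContinuousLinearMap in
lemma aux_projVec_nonneg (u : H) : 0 ≤ projVec u := by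
  rw [ContinuousLinearMap.nonneg_iff_isPositive]
  refine ⟨isSelfAdjoint_iff_isSymmetric.mp (aux_projVec_selfAdjoint u), fun x => ?_⟩
  show 0 ≤ Complex.re ⟪projVec u x, x⟫_ℂ
  rw [aux_projVec_apply, inner_smul_left, mul_comm, Complex.mul_conj, Complex.ofReal_re]
  exact Complex.normSq_nonneg _

open ContinuousLinearMap in
lemma aux_projVec_isEffect (u : H) (hu : ‖u‖ = 1) : IsEffect (projVec u) := by
  refine ⟨aux_projVec_nonneg u, ?_⟩
  rw [ContinuousLinearMap.le_def]
  refine ⟨isSelfAdjoint_iff_isSymmetric.mp ((IsSelfAdjoint.one (R := H →L[ℂ] H)).sub (aux_projVec_selfAdjoint u)), fun x => ?_⟩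
  show 0 ≤ Complex.re ⟪(1 - projVec u) x, x⟫_ℂ
  have : (1 - projVec u) x = x - ⟪u, x⟫_ℂ • u := by
    rw [ContinuousLinearMap.sub_apply, ContinuousLinearMap.one_apply, aux_projVec_apply]
  have h1 : Complex.re ⟪x, x⟫_ℂ = ‖x‖ ^ 2 := by
    simpa using inner_self_eq_norm_sq (𝕜 := ℂ) x
  have hns : Complex.normSq ⟪u, x⟫_ℂ = ‖⟪u, x⟫_ℂ‖ ^ 2 := by
    rw [← Complex.sq_norm]
  rw [this, inner_sub_left, inner_smul_left, mul_comm, Complex.mul_conj,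
    Complex.sub_re, Complex.ofReal_re, h1, hns]
  have hcs : ‖⟪u, x⟫_ℂ‖ ≤ ‖u‖ * ‖x‖ := norm_inner_le_norm u x
  rw [hu, one_mul] at hcs
  nlinarith [norm_nonneg (⟪u, x⟫_ℂ)]

open ContinuousLinearMap in
lemma aux_projVec_isDensity (u : H) (hu : ‖u‖ = 1) : IsDensity (projVec u) := by
  have hP0 := aux_projVec_nonneg u
  have hPsa := aux_projVec_selfAdjoint u
  have hPP : projVec u * projVec u = projVec u := by
    ext x
    have huu : ⟪u, u⟫_ℂ = 1 := by
      rw [inner_self_eq_norm_sq_to_K, hu]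
      norm_num
    show projVec u (projVec u x) = projVec u x
    simp [aux_projVec_apply, inner_smul_right, huu, hu]
  refine ⟨hP0, ?_, ?_⟩
  · unfold IsTraceClass
    have hsq : sqrtOp (star (projVec u) * projVec u) = projVec u := by
      rw [sqrtOp, hPsa.star_eq]
      have h := CFC.sqrt_mul_self (projVec u) hP0
      rw [hPP] at h ⊢
      exact h
    rw [hsq]
    refine ((stdBasis H).summable_inner_mul_inner u u).congr fun i => ?_
    show ⟪u, (stdBasis H i : H)⟫_ℂ * ⟪(stdBasis H i : H), u⟫_ℂ
        = ⟪(stdBasis H i : H), ⟪u, (stdBasis H i : H)⟫_ℂ • u⟫_ℂ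
    rw [inner_smul_right]
  · rw [traceOp]
    have e : ∀ i : stdIdx H, ⟪(stdBasis H i : H), projVec u (stdBasis H i : H)⟫_ℂ
        = ⟪u, (stdBasis H i : H)⟫_ℂ * ⟪(stdBasis H i : H), u⟫_ℂ := by
      intro i
      rw [aux_projVec_apply, inner_smul_right]
    rw [tsum_congr e, (stdBasis H).tsum_inner_mul_inner, inner_self_eq_norm_sq_to_K, hu]
    norm_num

end AuxProofs

/-- If `∘ : E(H) × E(H) → E(H)` satisfies the duality condition, then
`A ∘ (B + C) = A ∘ B + A ∘ C` for all effects `A, B, C` with `B + C` an effect. -/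
theorem duality_implies_additive
    (op : (H →L[ℂ] H) → (H →L[ℂ] H) → (H →L[ℂ] H)) (hmap : EffectClosed op)
    (hdual : DualityCond op) :
    ∀ A B C : H →L[ℂ] H, IsEffect A → IsEffect B → IsEffect C → IsEffect (B + C) →
      op A (B + C) = op A B + op A C := by
  intro A B C hA hB hC hBC
  have key : ∀ u : H, ‖u‖ = 1 →
      ⟪u, op A (B + C) u⟫_ℂ = ⟪u, op A B u⟫_ℂ + ⟪u, op A C u⟫_ℂ := by
    intro u hu
    have hPe : IsEffect (projVec u) := aux_projVec_isEffect u hu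
    have hPd : IsDensity (projVec u) := aux_projVec_isDensity u hu
    have hD0 : 0 ≤ op A (projVec u) := (hmap A (projVec u) hA hPe).1
    have hDtc : IsTraceClass (op A (projVec u)) := (hdual A B (projVec u) hA hB hPd).1
    have dual : ∀ X, IsEffect X → traceOp (op A (projVec u) * X) = ⟪u, op A X u⟫_ℂ := by
      intro X hX
      rw [(hdual A X (projVec u) hA hX hPd).2, aux_traceOp_projVec_mul]
    have hfB := aux_summable_diag (op A (projVec u)) B hD0 hDtc
    have hfC := aux_summable_diag (op A (projVec u)) C hD0 hDtc
    have split : traceOp (op A (projVec u) * (B + C))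
        = traceOp (op A (projVec u) * B) + traceOp (op A (projVec u) * C) := by
      have e : ∀ i : stdIdx H,
          ⟪(stdBasis H i : H), (op A (projVec u) * (B + C)) (stdBasis H i : H)⟫_ℂ
          = ⟪(stdBasis H i : H), (op A (projVec u) * B) (stdBasis H i : H)⟫_ℂ
            + ⟪(stdBasis H i : H), (op A (projVec u) * C) (stdBasis H i : H)⟫_ℂ := by
        intro i
        rw [mul_add, ContinuousLinearMap.add_apply, inner_add_right]
      rw [traceOp, tsum_congr e, Summable.tsum_add hfB hfC]
      rfl
    rw [← dual _ hBC, split, dual _ hB, dual _ hC]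
  have hz : ∀ x : H, ⟪x, (op A (B + C) - (op A B + op A C)) x⟫_ℂ = 0 := by
    intro x
    rcases eq_or_ne x 0 with rfl | hx
    · simp
    · set u : H := ((‖x‖ : ℂ))⁻¹ • x with hu_def
      have hxne : (‖x‖ : ℂ) ≠ 0 := by
        simpa using norm_ne_zero_iff.mpr hx
      have hn : ‖x‖ ≠ 0 := norm_ne_zero_iff.mpr hx
      have hu : ‖u‖ = 1 := by
        rw [hu_def, norm_smul, norm_inv, Complex.norm_real, Real.norm_eq_abs,
          abs_of_nonneg (norm_nonneg x), inv_mul_cancel₀ hn]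
      have hxu : x = (‖x‖ : ℂ) • u := by
        rw [hu_def, smul_smul, mul_inv_cancel₀ hxne, one_smul]
      have h0 : ⟪u, (op A (B + C) - (op A B + op A C)) u⟫_ℂ = 0 := by
        have hk := key u hu
        rw [ContinuousLinearMap.sub_apply, ContinuousLinearMap.add_apply,
          inner_sub_right, inner_add_right, hk]
        ring
      rw [hxu, map_smul, inner_smul_left, inner_smul_right, h0]
      ring
  have hT : op A (B + C) - (op A B + op A C) = 0 := by
    have h' : ∀ x : H, ⟪(op A (B + C) - (op A B + op A C)) x, x⟫_ℂ = 0 := by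
      intro x
      rw [← inner_conj_symm ((op A (B + C) - (op A B + op A C)) x) x, hz x, map_zero]
    have hlin := (inner_map_self_eq_zero
      ((op A (B + C) - (op A B + op A C) : H →L[ℂ] H) : H →ₗ[ℂ] H)).mp fun x => h' x
    apply ContinuousLinearMap.coe_injective
    rw [hlin]
    rfl
  exact sub_eq_zero.mp hT


end
end

section
/- Let H be a complex Hilbert space and let ∘ : E(H) × E(H) → E(H) satisfy the duality condition (A∘ρ is trace-class and Tr((A∘ρ)B) = Tr(ρ(A∘B)) for all ρ ∈ D(H) and A,B ∈ E(H)) and the unit condition (A∘I = I∘A = A for all A ∈ E(H)). Then for each A ∈ E(H) the map B ↦ A∘B is normal: whenever (B_i) is an increasing net in E(H) converging to B ∈ E(H) in the strong operator topology, the net (A∘B_i) is increasing and converges to A∘B in the strong operator topology. -/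
/-!
Common setup: effects, density operators, trace, square roots and the strong
operator topology on a complex Hilbert space `H`, together with the five
conditions (duality, unit, weak associativity, continuity, purity) defining a
sequential product on the set `E(H)` of quantum effects.
-/

set_option maxHeartbeats 1000000
set_option synthInstance.maxHeartbeats 1000000

open scoped InnerProductSpace ComplexOrder
open Filter

noncomputable section

variable (H : Type*) [NormedAddCommGroup H] [InnerProductSpace ℂ H] [CompleteSpace H]

variable {H}

namespace OpNormal

open ContinuousLinearMap RCLike

variable {H : Type*} [NormedAddCommGroup H] [InnerProductSpace ℂ H] [CompleteSpace H]

lemma isSelfAdjoint_of_nonneg' {S : H →L[ℂ] H} (hS : 0 ≤ S) : IsSelfAdjoint S :=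
  ((nonneg_iff_isPositive S).mp hS).isSelfAdjoint

lemma re_inner_nonneg {S : H →L[ℂ] H} (hS : 0 ≤ S) (x : H) :
    0 ≤ re ⟪x, S x⟫_ℂ := ((nonneg_iff_isPositive S).mp hS).re_inner_nonneg_right x

lemma re_inner_mono {S₁ S₂ : H →L[ℂ] H} (h : S₁ ≤ S₂) (x : H) :
    re ⟪x, S₁ x⟫_ℂ ≤ re ⟪x, S₂ x⟫_ℂ := by
  have h2 := ((ContinuousLinearMap.le_def S₁ S₂).mp h).re_inner_nonneg_right x
  rw [sub_apply, inner_sub_right, map_sub] at h2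
  linarith

lemma le_of_re_inner_le {S₁ S₂ : H →L[ℂ] H} (h₁ : IsSelfAdjoint S₁) (h₂ : IsSelfAdjoint S₂)
    (h : ∀ x, re ⟪x, S₁ x⟫_ℂ ≤ re ⟪x, S₂ x⟫_ℂ) : S₁ ≤ S₂ := by
  rw [ContinuousLinearMap.le_def]
  refine ⟨(h₂.sub h₁).isSymmetric, fun x => ?_⟩
  have h3 := h x
  rw [reApplyInnerSelf_apply, inner_re_symm, sub_apply, inner_sub_right, map_sub]
  linarith

lemma inner_eq_re {S : H →L[ℂ] H} (hS : 0 ≤ S) (x : H) :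
    ⟪x, S x⟫_ℂ = ((re ⟪x, S x⟫_ℂ : ℝ) : ℂ) := by
  have h1 : (starRingEnd ℂ) ⟪x, S x⟫_ℂ = ⟪x, S x⟫_ℂ := by
    rw [inner_conj_symm]
    exact (isSelfAdjoint_of_nonneg' hS).isSymmetric x x
  exact ((RCLike.conj_eq_iff_re).mp h1).symm

lemma hasSum_inner_sq (x : H) :
    HasSum (fun i => ‖⟪(stdBasis H i : H), x⟫_ℂ‖ ^ 2) (‖x‖ ^ 2) := by
  have h := (stdBasis H).hasSum_inner_mul_inner x x
  have h2 : ∀ i, ⟪x, (stdBasis H i : H)⟫_ℂ * ⟪(stdBasis H i : H), x⟫_ℂ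
      = (RCLike.ofReal (‖⟪(stdBasis H i : H), x⟫_ℂ‖ ^ 2) : ℂ) := by
    intro i
    rw [← inner_conj_symm (𝕜 := ℂ) x ((stdBasis H i : H)), RCLike.conj_mul, RCLike.ofReal_pow]
  simp_rw [h2, inner_self_eq_norm_sq_to_K, ← RCLike.ofReal_pow] at h
  exact (RCLike.hasSum_ofReal ℂ).mp h

lemma traceOp_mul_projVec (X : H →L[ℂ] H) (φ : H) :
    traceOp (X * projVec φ) = ⟪φ, X φ⟫_ℂ := by
  have h : ∀ i, ⟪(stdBasis H i : H), (X * projVec φ) (stdBasis H i)⟫_ℂ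
      = ⟪φ, (stdBasis H i : H)⟫_ℂ * ⟪(stdBasis H i : H), X φ⟫_ℂ := by
    intro i
    rw [ContinuousLinearMap.mul_apply]
    simp [projVec, inner_smul_right]
  unfold traceOp
  simp_rw [h]
  exact (stdBasis H).tsum_inner_mul_inner φ (X φ)

lemma traceOp_projVec_mul (X : H →L[ℂ] H) (ψ : H) :
    traceOp (projVec ψ * X) = ⟪ψ, X ψ⟫_ℂ := by
  have h : ∀ i, ⟪(stdBasis H i : H), (projVec ψ * X) (stdBasis H i)⟫_ℂ
      = ⟪ContinuousLinearMap.adjoint X ψ, (stdBasis H i : H)⟫_ℂ * ⟪(stdBasis H i : H), ψ⟫_ℂ := by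
    intro i
    rw [ContinuousLinearMap.mul_apply]
    simp [projVec, inner_smul_right, ContinuousLinearMap.adjoint_inner_left, mul_comm]
  unfold traceOp
  simp_rw [h]
  rw [(stdBasis H).tsum_inner_mul_inner, ContinuousLinearMap.adjoint_inner_left]
lemma isEffect_one : IsEffect (1 : H →L[ℂ] H) :=
  ⟨(ContinuousLinearMap.nonneg_iff_isPositive _).mpr ContinuousLinearMap.isPositive_one,
    le_refl 1⟩

lemma projVec_apply (ψ x : H) : projVec ψ x = ⟪ψ, x⟫_ℂ • ψ := rfl

lemma projVec_inner (ψ x y : H) :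
    ⟪x, projVec ψ y⟫_ℂ = ⟪x, ψ⟫_ℂ * ⟪ψ, y⟫_ℂ := by
  rw [projVec_apply, inner_smul_right]; ring

lemma projVec_nonneg (ψ : H) : 0 ≤ projVec ψ := by
  rw [ContinuousLinearMap.nonneg_iff_isPositive]
  rw [ContinuousLinearMap.isPositive_iff_complex]
  intro x
  have h : ⟪projVec ψ x, x⟫_ℂ = (RCLike.ofReal (‖⟪ψ, x⟫_ℂ‖ ^ 2) : ℂ) := by
    rw [projVec_apply, inner_smul_left, RCLike.conj_mul, RCLike.ofReal_pow]
  rw [h]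
  refine ⟨by rw [RCLike.ofReal_re]; norm_cast, by rw [RCLike.ofReal_re]; positivity⟩

lemma projVec_sa (ψ : H) : IsSelfAdjoint (projVec ψ) :=
  isSelfAdjoint_of_nonneg' (projVec_nonneg ψ)

lemma isEffect_projVec {ψ : H} (hψ : ‖ψ‖ = 1) : IsEffect (projVec ψ) := by
  refine ⟨projVec_nonneg ψ, ?_⟩
  rw [ContinuousLinearMap.le_def]
  refine ⟨((IsSelfAdjoint.one (H →L[ℂ] H)).sub (projVec_sa ψ)).isSymmetric, fun x => ?_⟩
  rw [ContinuousLinearMap.reApplyInnerSelf_apply, ContinuousLinearMap.sub_apply,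
    inner_sub_left, map_sub, ContinuousLinearMap.one_apply]
  have h1 : RCLike.re ⟪projVec ψ x, x⟫_ℂ = ‖⟪ψ, x⟫_ℂ‖ ^ 2 := by
    rw [projVec_apply, inner_smul_left, RCLike.conj_mul, ← RCLike.ofReal_pow,
      RCLike.ofReal_re]
  have h2 : ‖⟪ψ, x⟫_ℂ‖ ≤ ‖x‖ := by
    simpa [hψ] using norm_inner_le_norm (𝕜 := ℂ) ψ x
  have h3 : RCLike.re ⟪x, x⟫_ℂ = ‖x‖ ^ 2 := inner_self_eq_norm_sq x
  rw [h1, h3]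
  nlinarith [norm_nonneg ⟪ψ, x⟫_ℂ, norm_nonneg x]

lemma projVec_idem {ψ : H} (hψ : ‖ψ‖ = 1) : projVec ψ * projVec ψ = projVec ψ := by
  ext x
  rw [ContinuousLinearMap.mul_apply, projVec_apply, projVec_apply, inner_smul_right]
  rw [inner_self_eq_norm_sq_to_K, hψ]
  simp [smul_smul, projVec_apply]

lemma isDensity_projVec {ψ : H} (hψ : ‖ψ‖ = 1) : IsDensity (projVec ψ) := by
  refine ⟨projVec_nonneg ψ, ?_, ?_⟩
  · unfold IsTraceClass
    have hsqrt : sqrtOp (star (projVec ψ) * projVec ψ) = projVec ψ := by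
      rw [(projVec_sa ψ).star_eq, projVec_idem hψ]
      show CFC.sqrt _ = _
      nth_rewrite 1 [← projVec_idem hψ]
      exact CFC.sqrt_mul_self (projVec ψ) (projVec_nonneg ψ)
    rw [hsqrt]
    refine ((stdBasis H).summable_inner_mul_inner ψ ψ).congr fun i => ?_
    rw [projVec_inner]
    ring
  · unfold traceOp
    have h : ∀ i, ⟪(stdBasis H i : H), projVec ψ (stdBasis H i)⟫_ℂ
        = ⟪ψ, (stdBasis H i : H)⟫_ℂ * ⟪(stdBasis H i : H), ψ⟫_ℂ := fun i => by
      rw [projVec_inner]; ring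
    simp_rw [h]
    rw [(stdBasis H).tsum_inner_mul_inner ψ ψ, inner_self_eq_norm_sq_to_K, hψ]
    norm_num
lemma effect_repr {T : H →L[ℂ] H} (hT : 0 ≤ T) (hTC : IsTraceClass T) :
    ∃ v : stdIdx H → H, Summable (fun k => ‖v k‖ ^ 2) ∧
      ∀ S : H →L[ℂ] H, IsEffect S → traceOp (T * S) = ∑' k, ⟪v k, S (v k)⟫_ℂ := by
  set R := sqrtOp T with hRdef
  have hRpos : 0 ≤ R := CFC.sqrt_nonneg (a := T)
  have hRsa : IsSelfAdjoint R := isSelfAdjoint_of_nonneg' hRpos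
  have hRsym : ∀ x y : H, ⟪R x, y⟫_ℂ = ⟪x, R y⟫_ℂ := fun x y => hRsa.isSymmetric x y
  have hRR : R * R = T := CFC.sqrt_mul_sqrt_self T hT
  set e : stdIdx H → H := fun k => (stdBasis H k : H) with he
  have hsum0 : Summable (fun k => ⟪e k, T (e k)⟫_ℂ) := by
    have hs : sqrtOp (star T * T) = T := by
      rw [(isSelfAdjoint_of_nonneg' hT).star_eq]
      show CFC.sqrt (T * T) = T
      exact CFC.sqrt_mul_self T hT
    unfold IsTraceClass at hTC
    rwa [hs] at hTC
  have hterm : ∀ k, ⟪e k, T (e k)⟫_ℂ = (RCLike.ofReal (‖R (e k)‖ ^ 2) : ℂ) := by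
    intro k
    rw [← hRR, ContinuousLinearMap.mul_apply, ← hRsym, inner_self_eq_norm_sq_to_K,
      RCLike.ofReal_pow]
  have hv : Summable (fun k => ‖R (e k)‖ ^ 2) :=
    (RCLike.summable_ofReal ℂ).mp (hsum0.congr hterm)
  refine ⟨fun k => R (e k), hv, ?_⟩
  intro S hS
  have hSsa : IsSelfAdjoint S := isSelfAdjoint_of_nonneg' hS.1
  have hSsym : ∀ x y : H, ⟪S x, y⟫_ℂ = ⟪x, S y⟫_ℂ := fun x y => hSsa.isSymmetric x y
  set a : stdIdx H × stdIdx H → ℂ :=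
    fun p => ⟪R (e p.1), e p.2⟫_ℂ * ⟪R (e p.2), S (e p.1)⟫_ℂ with ha
  have hb1 : Summable (fun p : stdIdx H × stdIdx H => ‖⟪R (e p.1), e p.2⟫_ℂ‖ ^ 2) := by
    refine (summable_prod_of_nonneg (fun p => by positivity)).mpr ⟨fun k => ?_, ?_⟩
    · exact ((hasSum_inner_sq (R (e k))).summable).congr fun j => by rw [norm_inner_symm]
    · refine hv.congr fun k => ?_
      rw [← (hasSum_inner_sq (R (e k))).tsum_eq]
      exact tsum_congr fun j => by rw [norm_inner_symm]
  have hb2 : Summable (fun p : stdIdx H × stdIdx H => ‖⟪R (e p.2), S (e p.1)⟫_ℂ‖ ^ 2) := by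
    have hswap : Summable (fun q : stdIdx H × stdIdx H => ‖⟪R (e q.1), S (e q.2)⟫_ℂ‖ ^ 2) := by
      refine (summable_prod_of_nonneg (fun p => by positivity)).mpr ⟨fun j => ?_, ?_⟩
      · refine ((hasSum_inner_sq (S (R (e j)))).summable).congr fun k => ?_
        rw [← hSsym (R (e j)) (e k), norm_inner_symm]
      · refine Summable.of_nonneg_of_le (fun j => tsum_nonneg fun k => by positivity)
          (fun j => ?_) (hv.mul_left (‖S‖ ^ 2))
        have h1 : ∑' k, ‖⟪R (e j), S (e k)⟫_ℂ‖ ^ 2 = ‖S (R (e j))‖ ^ 2 := by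
          rw [← (hasSum_inner_sq (S (R (e j)))).tsum_eq]
          exact tsum_congr fun k => by rw [← hSsym (R (e j)) (e k), norm_inner_symm]
        rw [h1]
        have h2 := S.le_opNorm (R (e j))
        nlinarith [norm_nonneg (S (R (e j))), norm_nonneg (R (e j)), norm_nonneg S]
    exact ((Equiv.prodComm (stdIdx H) (stdIdx H)).summable_iff).mpr hswap
  have haSum : Summable a := by
    apply Summable.of_norm
    refine Summable.of_nonneg_of_le (fun p => norm_nonneg _) (fun p => ?_)
      ((hb1.add hb2).div_const 2)
    simp only [ha, norm_mul]
    nlinarith [sq_nonneg (‖⟪R (e p.1), e p.2⟫_ℂ‖ - ‖⟪R (e p.2), S (e p.1)⟫_ℂ‖),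
      norm_nonneg ⟪R (e p.1), e p.2⟫_ℂ, norm_nonneg ⟪R (e p.2), S (e p.1)⟫_ℂ]
  have hLHS : ∀ k, ⟪e k, (T * S) (e k)⟫_ℂ = ∑' j, a (k, j) := by
    intro k
    rw [ContinuousLinearMap.mul_apply, ← hRR, ContinuousLinearMap.mul_apply,
      ← hRsym (e k) (R (S (e k))),
      ← (stdBasis H).tsum_inner_mul_inner (R (e k)) (R (S (e k)))]
    refine tsum_congr fun j => ?_
    simp only [ha]
    rw [hRsym (e j) (S (e k))]
  have hRHS : ∀ j, ⟪R (e j), S (R (e j))⟫_ℂ = ∑' k, a (k, j) := by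
    intro j
    rw [← hSsym (R (e j)) (R (e j)),
      ← (stdBasis H).tsum_inner_mul_inner (S (R (e j))) (R (e j))]
    refine tsum_congr fun k => ?_
    simp only [ha]
    rw [hRsym (e k) (e j), ← hSsym (R (e j)) (e k), mul_comm]
  unfold traceOp
  calc ∑' k, ⟪(stdBasis H k : H), (T * S) (stdBasis H k)⟫_ℂ
      = ∑' k, ∑' j, a (k, j) := tsum_congr hLHS
    _ = ∑' j, ∑' k, a (k, j) := (Summable.tsum_comm (f := fun k j => a (k, j)) (by exact haSum)).symm
    _ = ∑' j, ⟪R (e j), S (R (e j))⟫_ℂ := tsum_congr fun j => (hRHS j).symm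
lemma re_q_le {S : H →L[ℂ] H} (hS : IsEffect S) (x : H) :
    RCLike.re ⟪x, S x⟫_ℂ ≤ ‖x‖ ^ 2 := by
  have h := re_inner_mono hS.2 x
  rwa [ContinuousLinearMap.one_apply, inner_self_eq_norm_sq] at h

lemma summable_re_q {v : ↑(stdIdx H) → H} (hv : Summable fun k => ‖v k‖ ^ 2)
    {S : H →L[ℂ] H} (hS : IsEffect S) :
    Summable fun k => RCLike.re ⟪v k, S (v k)⟫_ℂ :=
  Summable.of_nonneg_of_le (fun k => re_inner_nonneg hS.1 _)
    (fun k => re_q_le hS (v k)) hv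

lemma quad_repr (op : (H →L[ℂ] H) → (H →L[ℂ] H) → (H →L[ℂ] H)) (hmap : EffectClosed op)
    (hdual : DualityCond op) {A : H →L[ℂ] H} (hA : IsEffect A) {ψ : H} (hψ : ‖ψ‖ = 1) :
    ∃ v : ↑(stdIdx H) → H, Summable (fun k => ‖v k‖ ^ 2) ∧
      ∀ S : H →L[ℂ] H, IsEffect S →
        RCLike.re ⟪ψ, op A S ψ⟫_ℂ = ∑' k, RCLike.re ⟪v k, S (v k)⟫_ℂ := by
  have hPe := isEffect_projVec hψ
  have hPd := isDensity_projVec hψ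
  have hT : IsEffect (op A (projVec ψ)) := hmap A (projVec ψ) hA hPe
  have hTC : IsTraceClass (op A (projVec ψ)) := (hdual A 1 (projVec ψ) hA isEffect_one hPd).1
  obtain ⟨v, hv, hrepr⟩ := effect_repr hT.1 hTC
  refine ⟨v, hv, fun S hS => ?_⟩
  have h1 : ⟪ψ, op A S ψ⟫_ℂ = traceOp (projVec ψ * op A S) := (traceOp_projVec_mul _ ψ).symm
  have h2 : traceOp (projVec ψ * op A S) = traceOp (op A (projVec ψ) * S) :=
    ((hdual A S (projVec ψ) hA hS hPd).2).symm
  have h3 := hrepr S hS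
  have hsum := summable_re_q hv hS
  have h5 : ∑' k, ⟪v k, S (v k)⟫_ℂ = ((∑' k, RCLike.re ⟪v k, S (v k)⟫_ℂ : ℝ) : ℂ) := by
    rw [Complex.ofReal_tsum]
    exact tsum_congr fun k => inner_eq_re hS.1 (v k)
  rw [h1, h2, h3, h5]
  simp

lemma norm_effect_le_one {S : H →L[ℂ] H} (hS : IsEffect S) : ‖S‖ ≤ 1 :=
  (CStarAlgebra.norm_le_one_iff_of_nonneg S hS.1).mpr hS.2

lemma norm_apply_sq_le {D : H →L[ℂ] H} (hD : 0 ≤ D) (x : H) :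
    ‖D x‖ ^ 2 ≤ ‖D‖ * RCLike.re ⟪x, D x⟫_ℂ := by
  set R := CFC.sqrt D with hRdef
  have hRpos : 0 ≤ R := CFC.sqrt_nonneg (a := D)
  have hRsa : IsSelfAdjoint R := isSelfAdjoint_of_nonneg' hRpos
  have hRR : R * R = D := CFC.sqrt_mul_sqrt_self D hD
  have h1 : D x = R (R x) := by rw [← hRR]; rfl
  have hRsym : ∀ a b : H, ⟪R a, b⟫_ℂ = ⟪a, R b⟫_ℂ := fun a b => hRsa.isSymmetric a b
  have h2 : RCLike.re ⟪x, D x⟫_ℂ = ‖R x‖ ^ 2 := by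
    rw [h1, ← hRsym x (R x), inner_self_eq_norm_sq]
  have h3 : ‖D‖ = ‖R‖ * ‖R‖ := by
    conv_lhs => rw [← hRR]
    rw [show R * R = star R * R by rw [hRsa.star_eq]]
    exact CStarRing.norm_star_mul_self
  have h4 : ‖D x‖ ≤ ‖R‖ * ‖R x‖ := by rw [h1]; exact R.le_opNorm (R x)
  rw [h2, h3]
  nlinarith [norm_nonneg (D x), norm_nonneg (R x), norm_nonneg R]

lemma norm_unitize {x : H} (hx : x ≠ 0) : ‖(RCLike.ofReal ‖x‖⁻¹ : ℂ) • x‖ = 1 := by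
  have hn : (0:ℝ) < ‖x‖ := norm_pos_iff.mpr hx
  rw [norm_smul, RCLike.norm_ofReal, abs_inv, abs_norm]
  field_simp

lemma re_inner_scale (C : H →L[ℂ] H) {x : H} (hx : x ≠ 0) :
    RCLike.re ⟪x, C x⟫_ℂ = ‖x‖ ^ 2 *
      RCLike.re ⟪(RCLike.ofReal ‖x‖⁻¹ : ℂ) • x, C ((RCLike.ofReal ‖x‖⁻¹ : ℂ) • x)⟫_ℂ := by
  have hn : (0:ℝ) < ‖x‖ := norm_pos_iff.mpr hx
  rw [map_smul, inner_smul_left, inner_smul_right, RCLike.conj_ofReal, ← mul_assoc,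
    ← RCLike.ofReal_mul, RCLike.re_ofReal_mul]
  field_simp
end OpNormal

/-- If `∘ : E(H) × E(H) → E(H)` satisfies the duality and unit conditions, then for every
effect `A` the map `B ↦ A ∘ B` is normal: if `(B_i)` is an increasing net of effects
converging to an effect `B` in the strong operator topology, then `(A ∘ B_i)` is an
increasing net converging to `A ∘ B` in the strong operator topology. -/
theorem op_is_normal
    (op : (H →L[ℂ] H) → (H →L[ℂ] H) → (H →L[ℂ] H)) (hmap : EffectClosed op)
    (hdual : DualityCond op) (hunit : UnitCond op)
    (A : H →L[ℂ] H) (hA : IsEffect A)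
    {ι : Type*} [Nonempty ι] [Preorder ι] [IsDirected ι (· ≤ ·)]
    (Bnet : ι → H →L[ℂ] H) (B : H →L[ℂ] H)
    (hmono : Monotone Bnet) (heff : ∀ i, IsEffect (Bnet i)) (hB : IsEffect B)
    (hconv : ∀ x : H, Tendsto (fun i => Bnet i x) atTop (nhds (B x))) :
    Monotone (fun i => op A (Bnet i)) ∧
    ∀ x : H, Tendsto (fun i => op A (Bnet i) x) atTop (nhds (op A B x)) := by
  have hCeff : ∀ i, IsEffect (op A (Bnet i)) := fun i => hmap A (Bnet i) hA (heff i)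
  have hCB : IsEffect (op A B) := hmap A B hA hB
  have hBle : ∀ i, Bnet i ≤ B := by
    intro i
    refine OpNormal.le_of_re_inner_le (OpNormal.isSelfAdjoint_of_nonneg' (heff i).1)
      (OpNormal.isSelfAdjoint_of_nonneg' hB.1) fun x => ?_
    have h1 : Tendsto (fun j => RCLike.re ⟪x, Bnet j x⟫_ℂ) atTop
        (nhds (RCLike.re ⟪x, B x⟫_ℂ)) :=
      ((RCLike.continuous_re.comp (innerSL ℂ x).continuous).tendsto (B x)).comp (hconv x)
    refine ge_of_tendsto h1 ?_
    filter_upwards [Filter.eventually_ge_atTop i] with j hj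
    exact OpNormal.re_inner_mono (hmono hj) x
  constructor
  · intro i j hij
    refine OpNormal.le_of_re_inner_le (OpNormal.isSelfAdjoint_of_nonneg' (hCeff i).1)
      (OpNormal.isSelfAdjoint_of_nonneg' (hCeff j).1) fun x => ?_
    rcases eq_or_ne x 0 with rfl | hx
    · simp
    obtain ⟨v, hv, hrepr⟩ := OpNormal.quad_repr op hmap hdual hA (OpNormal.norm_unitize hx)
    rw [OpNormal.re_inner_scale _ hx, OpNormal.re_inner_scale _ hx,
      hrepr _ (heff i), hrepr _ (heff j)]
    exact mul_le_mul_of_nonneg_left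
      (Summable.tsum_le_tsum (fun k => OpNormal.re_inner_mono (hmono hij) (v k))
        (OpNormal.summable_re_q hv (heff i)) (OpNormal.summable_re_q hv (heff j)))
      (sq_nonneg _)
  · intro x
    rcases eq_or_ne x 0 with rfl | hx
    · simpa using tendsto_const_nhds
    obtain ⟨v, hv, hrepr⟩ := OpNormal.quad_repr op hmap hdual hA (OpNormal.norm_unitize hx)
    have hlim : Tendsto (fun i => ∑' k, RCLike.re ⟪v k, Bnet i (v k)⟫_ℂ) atTop
        (nhds (∑' k, RCLike.re ⟪v k, B (v k)⟫_ℂ)) := by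
      refine tendsto_tsum_of_dominated_convergence hv (fun k => ?_) ?_
      · exact ((RCLike.continuous_re.comp (innerSL ℂ (v k)).continuous).tendsto
          (B (v k))).comp (hconv (v k))
      · refine Filter.Eventually.of_forall fun i k => ?_
        rw [Real.norm_eq_abs, abs_of_nonneg (OpNormal.re_inner_nonneg (heff i).1 _)]
        exact OpNormal.re_q_le (heff i) (v k)
    have hlim2 : Tendsto (fun i => RCLike.re ⟪x, op A (Bnet i) x⟫_ℂ) atTop
        (nhds (RCLike.re ⟪x, op A B x⟫_ℂ)) := by
      have heq : ∀ i, RCLike.re ⟪x, op A (Bnet i) x⟫_ℂ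
          = ‖x‖ ^ 2 * ∑' k, RCLike.re ⟪v k, Bnet i (v k)⟫_ℂ := fun i => by
        rw [OpNormal.re_inner_scale _ hx, hrepr _ (heff i)]
      have heqB : RCLike.re ⟪x, op A B x⟫_ℂ
          = ‖x‖ ^ 2 * ∑' k, RCLike.re ⟪v k, B (v k)⟫_ℂ := by
        rw [OpNormal.re_inner_scale _ hx, hrepr _ hB]
      rw [heqB]
      simp_rw [heq]
      exact hlim.const_mul _
    have hCle : ∀ i, op A (Bnet i) ≤ op A B := by
      intro i
      refine OpNormal.le_of_re_inner_le (OpNormal.isSelfAdjoint_of_nonneg' (hCeff i).1)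
        (OpNormal.isSelfAdjoint_of_nonneg' hCB.1) fun y => ?_
      rcases eq_or_ne y 0 with rfl | hy
      · simp
      obtain ⟨w, hw, hreprw⟩ := OpNormal.quad_repr op hmap hdual hA (OpNormal.norm_unitize hy)
      rw [OpNormal.re_inner_scale _ hy, OpNormal.re_inner_scale _ hy,
        hreprw _ (heff i), hreprw _ hB]
      exact mul_le_mul_of_nonneg_left
        (Summable.tsum_le_tsum (fun k => OpNormal.re_inner_mono (hBle i) (w k))
          (OpNormal.summable_re_q hw (heff i)) (OpNormal.summable_re_q hw hB))
        (sq_nonneg _)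
    have hDpos : ∀ i, (0 : H →L[ℂ] H) ≤ op A B - op A (Bnet i) :=
      fun i => sub_nonneg.mpr (hCle i)
    have hDnorm : ∀ i, ‖op A B - op A (Bnet i)‖ ≤ 2 := fun i => by
      have h1 := OpNormal.norm_effect_le_one hCB
      have h2 := OpNormal.norm_effect_le_one (hCeff i)
      calc ‖op A B - op A (Bnet i)‖ ≤ ‖op A B‖ + ‖op A (Bnet i)‖ := norm_sub_le _ _
        _ ≤ 2 := by linarith
    have hsq : ∀ i, ‖(op A B - op A (Bnet i)) x‖ ^ 2 ≤
        2 * (RCLike.re ⟪x, op A B x⟫_ℂ - RCLike.re ⟪x, op A (Bnet i) x⟫_ℂ) := by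
      intro i
      have h1 := OpNormal.norm_apply_sq_le (hDpos i) x
      have h2 : RCLike.re ⟪x, (op A B - op A (Bnet i)) x⟫_ℂ
          = RCLike.re ⟪x, op A B x⟫_ℂ - RCLike.re ⟪x, op A (Bnet i) x⟫_ℂ := by
        rw [ContinuousLinearMap.sub_apply, inner_sub_right, map_sub]
      have h3 : 0 ≤ RCLike.re ⟪x, (op A B - op A (Bnet i)) x⟫_ℂ :=
        OpNormal.re_inner_nonneg (hDpos i) x
      have h4 := hDnorm i
      have h5 : (0:ℝ) ≤ ‖op A B - op A (Bnet i)‖ := norm_nonneg _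
      nlinarith
    have h0 : Tendsto (fun i => ‖(op A B - op A (Bnet i)) x‖ ^ 2) atTop (nhds 0) := by
      have ht : Tendsto (fun i => 2 * (RCLike.re ⟪x, op A B x⟫_ℂ
          - RCLike.re ⟪x, op A (Bnet i) x⟫_ℂ)) atTop (nhds 0) := by
        have h6 := (hlim2.const_sub (RCLike.re ⟪x, op A B x⟫_ℂ)).const_mul 2
        simpa using h6
      exact squeeze_zero (fun i => sq_nonneg _) hsq ht
    have h1 : Tendsto (fun i => ‖(op A B - op A (Bnet i)) x‖) atTop (nhds 0) := by
      have h7 := h0.sqrt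
      simpa [Real.sqrt_sq (norm_nonneg _)] using h7
    have h8 : Tendsto (fun i => op A (Bnet i) x - op A B x) atTop (nhds 0) := by
      rw [tendsto_zero_iff_norm_tendsto_zero]
      refine h1.congr fun i => ?_
      rw [ContinuousLinearMap.sub_apply, norm_sub_rev]
    exact tendsto_sub_nhds_zero_iff.mp h8

end
end

section
/- Let H be a complex Hilbert space and let U be a unitary operator on H such that U*BU = UBU* for every effect B ∈ E(H). Then U² = μI for some complex number μ with |μ| = 1. -/
/-!
Common setup: effects, density operators, trace, square roots and the strong
operator topology on a complex Hilbert space `H`, together with the five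
conditions (duality, unit, weak associativity, continuity, purity) defining a
sequential product on the set `E(H)` of quantum effects.
-/

set_option maxHeartbeats 1000000
set_option synthInstance.maxHeartbeats 1000000

open scoped InnerProductSpace ComplexOrder
open Filter

noncomputable section

variable (H : Type*) [NormedAddCommGroup H] [InnerProductSpace ℂ H] [CompleteSpace H]

variable {H}

/-- A rank-one projection onto a unit vector is an effect. -/
lemma projVec_isEffect {ψ : H} (hψ : ‖ψ‖ = 1) : IsEffect (projVec ψ) := by
  have happ : ∀ x : H, projVec ψ x = ⟪ψ, x⟫_ℂ • ψ := fun x => rfl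
  have hsa : IsSelfAdjoint (projVec ψ) := by
    rw [ContinuousLinearMap.isSelfAdjoint_iff_isSymmetric]
    intro x y
    show ⟪⟪ψ, x⟫_ℂ • ψ, y⟫_ℂ = ⟪x, ⟪ψ, y⟫_ℂ • ψ⟫_ℂ
    rw [inner_smul_left, inner_smul_right, ← inner_conj_symm ψ x, Complex.conj_conj]
    ring
  have hinner : ∀ x : H, ⟪projVec ψ x, x⟫_ℂ = (‖⟪ψ, x⟫_ℂ‖ : ℂ) ^ 2 := by
    intro x
    rw [happ, inner_smul_left, RCLike.conj_mul]
    norm_cast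
  constructor
  · rw [ContinuousLinearMap.nonneg_iff_isPositive]
    refine ⟨ContinuousLinearMap.isSelfAdjoint_iff_isSymmetric.mp hsa, fun x => ?_⟩
    have hre : ContinuousLinearMap.reApplyInnerSelf (projVec ψ) x = ‖⟪ψ, x⟫_ℂ‖ ^ 2 := by
      simp only [ContinuousLinearMap.reApplyInnerSelf, hinner x]
      rw [← Complex.ofReal_pow]; exact Complex.ofReal_re _
    rw [hre]
    positivity
  · rw [ContinuousLinearMap.le_def]
    refine ⟨ContinuousLinearMap.isSelfAdjoint_iff_isSymmetric.mp ((IsSelfAdjoint.one _).sub hsa), fun x => ?_⟩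
    simp only [ContinuousLinearMap.reApplyInnerSelf, ContinuousLinearMap.sub_apply,
      ContinuousLinearMap.one_apply, inner_sub_left, map_sub]
    rw [hinner x]
    have h1 : RCLike.re ⟪x, x⟫_ℂ = ‖x‖ ^ 2 := @inner_self_eq_norm_sq ℂ _ _ _ _ x
    have h2 : RCLike.re ((‖⟪ψ, x⟫_ℂ‖ : ℂ) ^ 2) = ‖⟪ψ, x⟫_ℂ‖ ^ 2 := by
      rw [← Complex.ofReal_pow]; exact Complex.ofReal_re _
    rw [h1, h2, sub_nonneg]
    have := norm_inner_le_norm (𝕜 := ℂ) ψ x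
    rw [hψ, one_mul] at this
    exact pow_le_pow_left₀ (norm_nonneg _) this 2

/-- If `U` is a unitary operator such that `U*BU = UBU*` for every effect `B`, then
`U² = μI` for some complex number `μ` with `|μ| = 1`. -/
theorem unitary_square_is_scalar
    (U : H →L[ℂ] H) (hU : U ∈ unitary (H →L[ℂ] H))
    (h : ∀ B : H →L[ℂ] H, IsEffect B → star U * B * U = U * B * star U) :
    ∃ μ : ℂ, ‖μ‖ = 1 ∧ U * U = μ • (1 : H →L[ℂ] H) := by
  obtain ⟨hU1, hU2⟩ := Unitary.mem_iff.mp hU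
  -- U² commutes with every effect
  have hcomm : ∀ B : H →L[ℂ] H, IsEffect B → B * (U * U) = (U * U) * B := by
    intro B hB
    have hmul := congrArg (fun X => U * X * U) (h B hB)
    replace hmul : U * (star U * B * U) * U = U * (U * B * star U) * U := hmul
    have e1 : U * (star U * B * U) * U = B * (U * U) := by
      have : U * (star U * B * U) * U = (U * star U) * B * (U * U) := by noncomm_ring
      rw [this, hU2, one_mul]
    have e2 : U * (U * B * star U) * U = (U * U) * B := by
      have : U * (U * B * star U) * U = (U * U) * B * (star U * U) := by noncomm_ring
      rw [this, hU1, mul_one]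
    rw [← e1, ← e2, hmul]
  -- every vector is mapped into its own span by U²
  have hspan : ∀ x : H, ∃ c : ℂ, (U * U) x = c • x := by
    intro x
    rcases eq_or_ne x 0 with rfl | hx
    · exact ⟨0, by simp⟩
    have ha0 : (‖x‖ : ℂ) ≠ 0 := by
      simpa using norm_ne_zero_iff.mpr hx
    set ψ : H := (‖x‖ : ℂ)⁻¹ • x with hψdef
    have hψ : ‖ψ‖ = 1 := by
      rw [hψdef, norm_smul, norm_inv, Complex.norm_real, norm_norm,
        inv_mul_cancel₀ (norm_ne_zero_iff.mpr hx)]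
    have hc := hcomm (projVec ψ) (projVec_isEffect hψ)
    have happ := congrArg (fun T : H →L[ℂ] H => T ψ) hc
    have hPψ : projVec ψ ψ = ψ := by
      show ⟪ψ, ψ⟫_ℂ • ψ = ψ
      rw [@inner_self_eq_norm_sq_to_K ℂ, hψ]
      norm_num
    simp only [ContinuousLinearMap.mul_apply, hPψ] at happ
    have key : (U * U) ψ = ⟪ψ, (U * U) ψ⟫_ℂ • ψ := happ.symm
    refine ⟨⟪ψ, (U * U) ψ⟫_ℂ, ?_⟩
    have hxψ : x = (‖x‖ : ℂ) • ψ := by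
      rw [hψdef, smul_smul, mul_inv_cancel₀ ha0, one_smul]
    conv_lhs => rw [hxψ]
    conv_rhs => rw [hxψ]
    rw [map_smul]
    conv_lhs => rw [key]
    rw [smul_comm]
  -- from hspan: U² is scalar
  cases subsingleton_or_nontrivial H with
  | inl hs =>
      refine ⟨1, by simp, ?_⟩
      ext x
      simp [Subsingleton.elim x 0]
  | inr hnt =>
      obtain ⟨x₀, hx₀⟩ := exists_ne (0 : H)
      obtain ⟨μ, hμ⟩ := hspan x₀
      have hall : ∀ x : H, (U * U) x = μ • x := by
        intro x
        rcases eq_or_ne x 0 with rfl | hx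
        · simp
        obtain ⟨c, hc⟩ := hspan x
        by_cases hdep : ∃ a : ℂ, x = a • x₀
        · obtain ⟨a, rfl⟩ := hdep
          rw [map_smul, hμ, smul_smul, smul_smul, mul_comm]
        · push_neg at hdep
          obtain ⟨d, hd⟩ := hspan (x + x₀)
          rw [map_add, hc, hμ, smul_add] at hd
          have heq : (c - d) • x + (μ - d) • x₀ = 0 := by
            calc (c - d) • x + (μ - d) • x₀
                = (c • x + μ • x₀) - (d • x + d • x₀) := by
                  rw [sub_smul, sub_smul]; abel
              _ = 0 := by rw [hd, sub_self]
          have hcd : c = d := by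
            by_contra hne
            have h1 : (c - d) • x = (d - μ) • x₀ := by
              have h0 := eq_neg_of_add_eq_zero_left heq
              rw [h0, ← neg_smul, neg_sub]
            have h2 := congrArg (fun y => (c - d)⁻¹ • y) h1
            simp only [smul_smul] at h2
            rw [inv_mul_cancel₀ (sub_ne_zero.mpr hne), one_smul] at h2
            exact hdep _ h2
          have hz : (μ - d) • x₀ = 0 := by
            rw [hcd, sub_self, zero_smul, zero_add] at heq
            exact heq
          have hμd : μ = d := by
            rcases smul_eq_zero.mp hz with h' | h'
            · exact sub_eq_zero.mp h'
            · exact absurd h' hx₀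
          rw [hc, hcd, ← hμd]
      have hnorm : ‖μ‖ = 1 := by
        have h1 : ‖(U * U) x₀‖ = ‖x₀‖ := by
          rw [ContinuousLinearMap.mul_apply,
            ContinuousLinearMap.norm_map_of_mem_unitary hU,
            ContinuousLinearMap.norm_map_of_mem_unitary hU]
        rw [hall x₀, norm_smul] at h1
        have hx0 := norm_ne_zero_iff.mpr hx₀
        field_simp at h1
        exact h1
      refine ⟨μ, hnorm, ?_⟩
      ext x
      simpa using hall x

end
end

section
/- Let H be a complex Hilbert space, let A be an invertible effect on H (0 ≤ A ≤ I and A invertible), and let U be a partial isometry on H such that A = A^{1/2}U*UA^{1/2} and such that A^{1/2}U*BUA^{1/2} = UA^{1/2}BA^{1/2}U* for every effect B ∈ E(H). Then U is unitary, UA = AU, and U² = μI for some complex number μ with |μ| = 1. -/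
/-!
Common setup: effects, density operators, trace, square roots and the strong
operator topology on a complex Hilbert space `H`, together with the five
conditions (duality, unit, weak associativity, continuity, purity) defining a
sequential product on the set `E(H)` of quantum effects.
-/

set_option maxHeartbeats 1000000
set_option synthInstance.maxHeartbeats 1000000

open scoped InnerProductSpace ComplexOrder
open Filter

noncomputable section

variable (H : Type*) [NormedAddCommGroup H] [InnerProductSpace ℂ H] [CompleteSpace H]

variable {H}

/-- Auxiliary: an operator for which every vector is an eigenvector is scalar. -/
private lemma aux_scalar_of_eigen {T : H →L[ℂ] H}
    (h : ∀ x : H, ∃ c : ℂ, T x = c • x) : ∃ μ : ℂ, T = μ • (1 : H →L[ℂ] H) := by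
  rcases subsingleton_or_nontrivial H with hs | hn
  · exact ⟨1, by ext x; exact Subsingleton.elim _ _⟩
  · obtain ⟨x₀, hx₀⟩ := exists_ne (0 : H)
    obtain ⟨c₀, hc₀⟩ := h x₀
    refine ⟨c₀, ?_⟩
    ext y
    simp only [ContinuousLinearMap.smul_apply, ContinuousLinearMap.one_apply]
    obtain ⟨cy, hcy⟩ := h y
    by_cases hy : y = 0
    · simp [hy]
    by_cases hdep : ∃ a : ℂ, y = a • x₀
    · obtain ⟨a, rfl⟩ := hdep
      rw [map_smul, hc₀, smul_comm]
    · obtain ⟨cz, hcz⟩ := h (x₀ + y)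
      have e : c₀ • x₀ + cy • y = cz • x₀ + cz • y := by
        rw [← hc₀, ← hcy, ← map_add, hcz, smul_add]
      have hsum : (cz - c₀) • x₀ + (cz - cy) • y = 0 := by
        linear_combination (norm := module) -e
      have hzy : cz = cy := by
        by_contra hne
        apply hdep
        have h1 : (cz - cy) • y = (c₀ - cz) • x₀ := by
          rw [← sub_eq_zero]; rw [← hsum]; module
        have h2 : y = ((cz - cy)⁻¹ * (c₀ - cz)) • x₀ := by
          rw [mul_smul, ← h1, smul_smul, inv_mul_cancel₀ (sub_ne_zero.mpr hne), one_smul]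
        exact ⟨_, h2⟩
      have hy0 : cy = c₀ := by
        rw [hzy, sub_self, zero_smul, add_zero, smul_eq_zero] at hsum
        rcases hsum with h | h
        · exact sub_eq_zero.mp h
        · exact absurd h hx₀
      rw [hcy, hy0]

/-- If `A` is an invertible effect and `U` is a partial isometry with
`A = A^{1/2}U*UA^{1/2}` and `A^{1/2}U*BUA^{1/2} = UA^{1/2}BA^{1/2}U*` for every effect `B`,
then `U` is unitary, `UA = AU`, and `U² = μI` for some complex `μ` with `|μ| = 1`. -/
theorem partial_isometry_is_unitary
    (A : H →L[ℂ] H) (hA : IsEffect A) (hinv : IsUnit A)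
    (U : H →L[ℂ] H) (hU : IsIdempotentElem (star U * U))
    (h1 : A = sqrtOp A * (star U * U) * sqrtOp A)
    (h2 : ∀ B : H →L[ℂ] H, IsEffect B →
      sqrtOp A * star U * B * U * sqrtOp A = U * sqrtOp A * B * sqrtOp A * star U) :
    U ∈ unitary (H →L[ℂ] H) ∧ U * A = A * U ∧
      ∃ μ : ℂ, ‖μ‖ = 1 ∧ U * U = μ • (1 : H →L[ℂ] H) := by
  set S : H →L[ℂ] H := sqrtOp A with hSdef
  have hA0 : (0 : H →L[ℂ] H) ≤ A := hA.1
  have hS0 : (0 : H →L[ℂ] H) ≤ S := CFC.sqrt_nonneg _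
  have hSsa : IsSelfAdjoint S := hS0.isSelfAdjoint
  have hS2 : S * S = A := CFC.sqrt_mul_sqrt_self A hA0
  -- S is a unit
  obtain ⟨u, hu⟩ := hinv
  have hSu : IsUnit S := by
    have hb : S * (S * ↑u⁻¹) = 1 := by
      rw [← mul_assoc, hS2, ← hu, u.mul_inv]
    have hc : (↑u⁻¹ * S) * S = 1 := by
      rw [mul_assoc, hS2, ← hu, u.inv_mul]
    have hcb : (↑u⁻¹ * S : H →L[ℂ] H) = S * ↑u⁻¹ := by
      calc (↑u⁻¹ * S : H →L[ℂ] H) = (↑u⁻¹ * S) * (S * (S * ↑u⁻¹)) := by rw [hb, mul_one]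
        _ = ((↑u⁻¹ * S) * S) * (S * ↑u⁻¹) := by rw [← mul_assoc]
        _ = S * ↑u⁻¹ := by rw [hc, one_mul]
    exact ⟨⟨S, S * ↑u⁻¹, hb, by rw [← hcb]; exact hc⟩, rfl⟩
  -- cancellation of S on both sides
  have key : ∀ X : H →L[ℂ] H, (↑hSu.unit⁻¹ : H →L[ℂ] H) * (S * X * S) * ↑hSu.unit⁻¹ = X := by
    intro X
    have hvS : (↑hSu.unit⁻¹ : H →L[ℂ] H) * S = 1 := hSu.val_inv_mul
    have hSv : S * (↑hSu.unit⁻¹ : H →L[ℂ] H) = 1 := hSu.mul_val_inv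
    calc (↑hSu.unit⁻¹ : H →L[ℂ] H) * (S * X * S) * ↑hSu.unit⁻¹
        = ((↑hSu.unit⁻¹ : H →L[ℂ] H) * S) * X * (S * ↑hSu.unit⁻¹) := by noncomm_ring
      _ = X := by rw [hvS, hSv, one_mul, mul_one]
  have cancel : ∀ X Y : H →L[ℂ] H, S * X * S = S * Y * S → X = Y := fun X Y h => by
    rw [← key X, h, key Y]
  -- U is an isometry
  have h3 : star U * U = 1 := by
    apply cancel
    rw [← h1, mul_one, hS2]
  have hE1 : IsEffect (1 : H →L[ℂ] H) :=
    ⟨by simpa using star_mul_self_nonneg (1 : H →L[ℂ] H), le_refl 1⟩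
  -- A = U A U*
  have h4 : U * A * star U = A := by
    have h := h2 1 hE1
    simp only [mul_one] at h
    rw [mul_assoc S (star U) U, ← h1, mul_assoc U S S, hS2] at h
    exact h.symm
  -- U is surjective, hence unitary
  have hright : U * (A * star U * ↑u⁻¹) = 1 := by
    rw [← mul_assoc, ← mul_assoc, h4, ← hu, u.mul_inv]
  have hc' : A * star U * ↑u⁻¹ = star U := by
    calc A * star U * ↑u⁻¹ = (star U * U) * (A * star U * ↑u⁻¹) := by rw [h3, one_mul]
      _ = star U * (U * (A * star U * ↑u⁻¹)) := by rw [mul_assoc]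
      _ = star U := by rw [hright, mul_one]
  have h5 : U * star U = 1 := by rw [← hc']; exact hright
  have hUmem : U ∈ unitary (H →L[ℂ] H) := Unitary.mem_iff.mpr ⟨h3, h5⟩
  -- U commutes with A
  have hcomm : U * A = A * U := by
    calc U * A = U * A * (star U * U) := by rw [h3, mul_one]
      _ = (U * A * star U) * U := by rw [← mul_assoc]
      _ = A * U := by rw [h4]
  refine ⟨hUmem, hcomm, ?_⟩
  -- U commutes with S
  have hb0 : (0 : H →L[ℂ] H) ≤ U * S * star U := star_right_conjugate_nonneg hS0 U
  have hb2 : (U * S * star U) * (U * S * star U) = A := by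
    have e1 : (U * S * star U) * (U * S * star U) = U * S * (star U * U) * S * star U := by
      noncomm_ring
    rw [e1, h3, mul_one, mul_assoc U S S, hS2, h4]
  have hSA : S = U * S * star U := CFC.sqrt_unique hb2 hb0
  have hScomm : S * U = U * S := by
    calc S * U = (U * S * star U) * U := by rw [← hSA]
      _ = U * S * (star U * U) := by rw [mul_assoc]
      _ = U * S := by rw [h3, mul_one]
  have hSstar : star U * S = S * star U := by
    have h := congrArg star hScomm
    simp only [star_mul, hSsa.star_eq] at h
    exact h
  -- star U * B * U = U * B * star U for all effects B
  have h6 : ∀ B : H →L[ℂ] H, IsEffect B → star U * B * U = U * B * star U := by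
    intro B hB
    apply cancel
    calc S * (star U * B * U) * S = S * star U * B * U * S := by noncomm_ring
      _ = U * S * B * S * star U := h2 B hB
      _ = S * (U * B * star U) * S := by
          rw [← hScomm, mul_assoc (S * U * B) S (star U), ← hSstar]
          noncomm_ring
  -- U² commutes with all effects
  have h7 : ∀ B : H →L[ℂ] H, IsEffect B → (U * U) * B = B * (U * U) := by
    intro B hB
    have h := congrArg (fun X => U * X * U) (h6 B hB)
    calc (U * U) * B = U * (U * B * star U) * U := by
          rw [show U * (U * B * star U) * U = (U * U) * B * (star U * U) from by noncomm_ring,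
            h3, mul_one]
      _ = U * (star U * B * U) * U := h.symm
      _ = B * (U * U) := by
          rw [show U * (star U * B * U) * U = (U * star U) * (B * (U * U)) from by noncomm_ring,
            h5, one_mul]
  -- every vector is an eigenvector of U²
  have heig : ∀ x : H, ∃ c : ℂ, (U * U) x = c • x := by
    intro x
    by_cases hx : x = 0
    · exact ⟨0, by simp [hx]⟩
    set ψ : H := ((‖x‖ : ℂ))⁻¹ • x with hψdef
    have hxn : ‖x‖ ≠ 0 := norm_ne_zero_iff.mpr hx
    have hψn : ‖ψ‖ = 1 := by
      rw [hψdef, norm_smul, norm_inv, Complex.norm_real, Real.norm_eq_abs,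
        abs_of_nonneg (norm_nonneg x), inv_mul_cancel₀ hxn]
    have hψψ : ⟪ψ, ψ⟫_ℂ = 1 := by
      rw [inner_self_eq_norm_sq_to_K, hψn]; norm_num
    set P : H →L[ℂ] H := projVec ψ with hPdef
    have hPapp : ∀ z : H, P z = ⟪ψ, z⟫_ℂ • ψ := fun z => rfl
    have hPsa : IsSelfAdjoint P := by
      rw [ContinuousLinearMap.isSelfAdjoint_iff_isSymmetric]
      intro a b
      simp only [ContinuousLinearMap.coe_coe, hPapp, inner_smul_left, inner_smul_right,
        inner_conj_symm]
      ring
    have hPidem : P * P = P := by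
      ext z
      simp only [ContinuousLinearMap.mul_apply, hPapp, inner_smul_right, hψψ, mul_one]
    have hP0 : (0 : H →L[ℂ] H) ≤ P := by
      have h := star_mul_self_nonneg P
      rwa [hPsa.star_eq, hPidem] at h
    have hP1 : P ≤ 1 := by
      have hQsa : IsSelfAdjoint (1 - P) := (IsSelfAdjoint.one (R := H →L[ℂ] H)).sub hPsa
      have hQidem : (1 - P) * (1 - P) = 1 - P := by
        rw [sub_mul, one_mul, mul_sub, mul_one, hPidem]; abel
      have h := star_mul_self_nonneg (1 - P)
      rw [hQsa.star_eq, hQidem] at h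
      exact sub_nonneg.mp h
    have hPE : IsEffect P := ⟨hP0, hP1⟩
    have happ : (U * U) (P ψ) = P ((U * U) ψ) :=
      congrArg (fun T : H →L[ℂ] H => T ψ) (h7 P hPE)
    have hPψ : P ψ = ψ := by rw [hPapp, hψψ, one_smul]
    rw [hPψ] at happ
    -- happ : (U*U) ψ = P ((U*U) ψ)
    have hUψ : (U * U) ψ = ⟪ψ, (U * U) ψ⟫_ℂ • ψ := by rw [← hPapp]; exact happ
    refine ⟨⟪ψ, (U * U) ψ⟫_ℂ, ?_⟩
    have hxψ : x = (‖x‖ : ℂ) • ψ := by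
      rw [hψdef, smul_smul, mul_inv_cancel₀ (by exact_mod_cast hxn), one_smul]
    calc (U * U) x = (U * U) ((‖x‖ : ℂ) • ψ) := by conv_lhs => rw [hxψ]
      _ = (‖x‖ : ℂ) • ((U * U) ψ) := map_smul _ _ _
      _ = (‖x‖ : ℂ) • (⟪ψ, (U * U) ψ⟫_ℂ • ψ) := by rw [← hUψ]
      _ = ⟪ψ, (U * U) ψ⟫_ℂ • ((‖x‖ : ℂ) • ψ) := smul_comm _ _ _
      _ = ⟪ψ, (U * U) ψ⟫_ℂ • x := by rw [← hxψ]
  obtain ⟨μ, hμ⟩ := aux_scalar_of_eigen heig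
  rcases subsingleton_or_nontrivial H with hs | hn
  · exact ⟨1, norm_one, by ext x; exact Subsingleton.elim _ _⟩
  · refine ⟨μ, ?_, hμ⟩
    have hTu : star (U * U) * (U * U) = 1 := by
      rw [star_mul,
        show star U * star U * (U * U) = star U * (star U * U) * U from by noncomm_ring,
        h3, mul_one, h3]
    rw [hμ] at hTu
    rw [star_smul, star_one, smul_mul_smul_comm, one_mul] at hTu
    obtain ⟨x₀, hx₀⟩ := exists_ne (0 : H)
    have happ := congrArg (fun T : H →L[ℂ] H => T x₀) hTu
    simp only [ContinuousLinearMap.smul_apply, ContinuousLinearMap.one_apply] at happ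
    have hμμ : star μ * μ = 1 := by
      apply smul_left_injective ℂ hx₀
      simpa using happ
    have hn2 : ‖μ‖ * ‖μ‖ = 1 := by
      have := congrArg norm hμμ
      rwa [norm_mul, norm_star, norm_one] at this
    nlinarith [norm_nonneg μ]

end
end

section
/- Let H be a complex Hilbert space. The map (A, B) ↦ A^{1/2}BA^{1/2} from E(H) × E(H) to E(H) is jointly continuous when E(H) is equipped with the strong operator topology. -/
/-!
Common setup: effects, density operators, trace, square roots and the strong
operator topology on a complex Hilbert space `H`, together with the five
conditions (duality, unit, weak associativity, continuity, purity) defining a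
sequential product on the set `E(H)` of quantum effects.
-/

set_option maxHeartbeats 1000000
set_option synthInstance.maxHeartbeats 1000000

open scoped InnerProductSpace ComplexOrder
open Filter

noncomputable section

variable (H : Type*) [NormedAddCommGroup H] [InnerProductSpace ℂ H] [CompleteSpace H]

variable {H}

section AuxLemmas

open Polynomial
open scoped Topology

lemma effect_norm_le_one {A : H →L[ℂ] H} (hA : IsEffect A) : ‖A‖ ≤ 1 :=
  (CStarAlgebra.norm_le_one_iff_of_nonneg A hA.1).mpr hA.2

lemma effect_spectrum_subset {A : H →L[ℂ] H} (hA : IsEffect A) :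
    spectrum ℝ A ⊆ Set.Icc 0 1 := by
  intro x hx
  exact ⟨spectrum_nonneg_of_nonneg hA.1 hx,
    (CFC.le_one_iff (R := ℝ) A (IsSelfAdjoint.of_nonneg hA.1)).mp hA.2 x hx⟩

lemma sqrtOp_eq (A : H →L[ℂ] H) (hA : 0 ≤ A) : sqrtOp A = cfc Real.sqrt A := by
  rw [sqrtOp, CFC.sqrt_eq_cfc, cfc_nnreal_eq_real _ A hA]
  exact cfc_congr fun x hx => by
    rw [Real.coe_sqrt, Real.coe_toNNReal _ (spectrum_nonneg_of_nonneg hA hx)]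

lemma sqrt_effect_norm_le {B : H →L[ℂ] H} (hB : IsEffect B) : ‖sqrtOp B‖ ≤ 1 := by
  rw [sqrtOp_eq B hB.1]
  apply norm_cfc_le one_pos.le
  intro t ht
  rw [Real.norm_eq_abs, abs_of_nonneg (Real.sqrt_nonneg t)]
  exact Real.sqrt_le_one.mpr (effect_spectrum_subset hB ht).2

lemma tendsto_apply_comp {α : Type*} {l : Filter α} {F : α → H →L[ℂ] H} {A : H →L[ℂ] H}
    (hb : ∀ᶠ a in l, ‖F a‖ ≤ 1)
    (hF : ∀ x : H, Tendsto (fun a => F a x) l (𝓝 (A x)))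
    {g : α → H} {y : H} (hg : Tendsto g l (𝓝 y)) :
    Tendsto (fun a => F a (g a)) l (𝓝 (A y)) := by
  have h1 : Tendsto (fun a => F a (g a) - F a y) l (𝓝 0) := by
    refine squeeze_zero_norm' ?_ (tendsto_iff_norm_sub_tendsto_zero.mp hg)
    filter_upwards [hb] with a ha
    calc ‖F a (g a) - F a y‖ = ‖F a (g a - y)‖ := by rw [map_sub]
      _ ≤ ‖F a‖ * ‖g a - y‖ := (F a).le_opNorm _
      _ ≤ 1 * ‖g a - y‖ := mul_le_mul_of_nonneg_right ha (norm_nonneg _)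
      _ = ‖g a - y‖ := one_mul _
  simpa using h1.add (hF y)

lemma tendsto_aeval {α : Type*} {l : Filter α} {F : α → H →L[ℂ] H} {A : H →L[ℂ] H}
    (hb : ∀ᶠ a in l, ‖F a‖ ≤ 1)
    (hF : ∀ x : H, Tendsto (fun a => F a x) l (𝓝 (A x))) (q : ℝ[X]) :
    ∀ x : H, Tendsto (fun a => (Polynomial.aeval (F a) q) x) l (𝓝 ((Polynomial.aeval A q) x)) := by
  induction q using Polynomial.induction_on with
  | C r => intro x; simp only [Polynomial.aeval_C]; exact tendsto_const_nhds
  | add p q hp hq =>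
    intro x
    simpa only [map_add, ContinuousLinearMap.add_apply] using (hp x).add (hq x)
  | monomial n r ih =>
    intro x
    have e : ∀ (B : H →L[ℂ] H),
        (Polynomial.aeval B (C r * X ^ (n + 1)) : H →L[ℂ] H) x
          = B ((Polynomial.aeval B (C r * X ^ n)) x) := by
      intro B
      have h : (C r * X ^ (n + 1) : ℝ[X]) = X * (C r * X ^ n) := by ring
      rw [h, map_mul, Polynomial.aeval_X]
      rfl
    simp only [e]
    exact tendsto_apply_comp hb hF (ih x)

lemma tendsto_sqrtOp {α : Type*} {l : Filter α} {F : α → H →L[ℂ] H} {A : H →L[ℂ] H}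
    (hEff : ∀ᶠ a in l, IsEffect (F a)) (hAe : IsEffect A)
    (hF : ∀ x : H, Tendsto (fun a => F a x) l (𝓝 (A x))) (x : H) :
    Tendsto (fun a => sqrtOp (F a) x) l (𝓝 (sqrtOp A x)) := by
  have hb : ∀ᶠ a in l, ‖F a‖ ≤ 1 := hEff.mono fun a ha => effect_norm_le_one ha
  rw [Metric.tendsto_nhds]
  intro ε hε
  set δ := ε / (3 * (‖x‖ + 1)) with hδ
  have hδpos : 0 < δ := by positivity
  obtain ⟨P, hP⟩ := exists_polynomial_near_of_continuousOn 0 1 Real.sqrt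
      Real.continuous_sqrt.continuousOn δ hδpos
  have key : ∀ B : H →L[ℂ] H, IsEffect B → ‖sqrtOp B - Polynomial.aeval B P‖ ≤ δ := by
    intro B hB
    have hsa : IsSelfAdjoint B := .of_nonneg hB.1
    rw [sqrtOp_eq B hB.1, ← cfc_polynomial (R := ℝ) P B hsa,
      ← cfc_sub (R := ℝ) Real.sqrt P.eval B]
    apply norm_cfc_le hδpos.le
    intro t ht
    have := hP t (effect_spectrum_subset hB ht)
    rw [Real.norm_eq_abs, abs_sub_comm]
    exact this.le
  have hmid := tendsto_aeval hb hF P x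
  rw [Metric.tendsto_nhds] at hmid
  filter_upwards [hEff, hmid (ε / 3) (by positivity)] with a ha hmida
  have hbound : ∀ (B : H →L[ℂ] H), IsEffect B →
      ‖sqrtOp B x - (Polynomial.aeval B P) x‖ ≤ ε / 3 := by
    intro B hB
    calc ‖sqrtOp B x - (Polynomial.aeval B P) x‖
        = ‖(sqrtOp B - Polynomial.aeval B P) x‖ := by
          rw [ContinuousLinearMap.sub_apply]
      _ ≤ ‖sqrtOp B - Polynomial.aeval B P‖ * ‖x‖ := ContinuousLinearMap.le_opNorm _ _
      _ ≤ δ * ‖x‖ := mul_le_mul_of_nonneg_right (key B hB) (norm_nonneg _)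
      _ ≤ δ * (‖x‖ + 1) := by nlinarith [hδpos]
      _ = ε / 3 := by rw [hδ]; field_simp
  rw [dist_eq_norm]
  have expand : sqrtOp (F a) x - sqrtOp A x
      = (sqrtOp (F a) x - (Polynomial.aeval (F a) P) x)
        + ((Polynomial.aeval (F a) P) x - (Polynomial.aeval A P) x)
        + ((Polynomial.aeval A P) x - sqrtOp A x) := by abel
  rw [expand]
  calc ‖_ + _ + _‖ ≤ ‖(sqrtOp (F a) x - (Polynomial.aeval (F a) P) x)
        + ((Polynomial.aeval (F a) P) x - (Polynomial.aeval A P) x)‖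
        + ‖(Polynomial.aeval A P) x - sqrtOp A x‖ := norm_add_le _ _
    _ ≤ ‖sqrtOp (F a) x - (Polynomial.aeval (F a) P) x‖
        + ‖(Polynomial.aeval (F a) P) x - (Polynomial.aeval A P) x‖
        + ‖(Polynomial.aeval A P) x - sqrtOp A x‖ := by
          gcongr; exact norm_add_le _ _
    _ < ε / 3 + ε / 3 + ε / 3 := by
        have h1 := hbound (F a) ha
        have h2 : ‖(Polynomial.aeval (F a) P) x - (Polynomial.aeval A P) x‖ < ε / 3 := by
          rw [← dist_eq_norm]; exact hmida
        have h3 := hbound A hAe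
        rw [norm_sub_rev] at h3
        linarith
    _ = ε := by ring

lemma sot_tendsto_iff {α : Type*} {l : Filter α} {F : α → H →L[ℂ] H} {A : H →L[ℂ] H} :
    Tendsto F l (@nhds _ (sot H) A) ↔ ∀ x, Tendsto (fun a => F a x) l (𝓝 (A x)) := by
  rw [sot, nhds_induced, tendsto_comap_iff]
  exact tendsto_pi_nhds

end AuxLemmas

/-- The map `(A, B) ↦ A^{1/2} B A^{1/2}` is jointly continuous on `E(H) × E(H)` for the
strong operator topology. -/
theorem standard_product_jointly_sot_continuous :
    @ContinuousOn ((H →L[ℂ] H) × (H →L[ℂ] H)) (H →L[ℂ] H)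
      (@instTopologicalSpaceProd _ _ (sot H) (sot H)) (sot H)
      (fun p => sqrtOp p.1 * p.2 * sqrtOp p.1)
      {p | IsEffect p.1 ∧ IsEffect p.2} := by
  letI : TopologicalSpace (H →L[ℂ] H) := sot H
  rintro ⟨A, B⟩ ⟨hA, hB⟩
  show Filter.Tendsto (fun p : (H →L[ℂ] H) × (H →L[ℂ] H) => sqrtOp p.1 * p.2 * sqrtOp p.1)
      (nhdsWithin (A, B) {p : (H →L[ℂ] H) × (H →L[ℂ] H) | IsEffect p.1 ∧ IsEffect p.2})
      (nhds (sqrtOp A * B * sqrtOp A))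
  set l := nhdsWithin (A, B) {p : (H →L[ℂ] H) × (H →L[ℂ] H) | IsEffect p.1 ∧ IsEffect p.2}
    with hl
  have hmem : ∀ᶠ q in l, IsEffect q.1 ∧ IsEffect q.2 := eventually_mem_nhdsWithin
  have h1 : ∀ x, Tendsto (fun q : (H →L[ℂ] H) × (H →L[ℂ] H) => q.1 x) l (nhds (A x)) := by
    have : Tendsto (Prod.fst : (H →L[ℂ] H) × (H →L[ℂ] H) → _) l (@nhds _ (sot H) A) :=
      (continuous_fst.tendsto (A, B)).mono_left nhdsWithin_le_nhds
    exact sot_tendsto_iff.mp this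
  have h2 : ∀ x, Tendsto (fun q : (H →L[ℂ] H) × (H →L[ℂ] H) => q.2 x) l (nhds (B x)) := by
    have : Tendsto (Prod.snd : (H →L[ℂ] H) × (H →L[ℂ] H) → _) l (@nhds _ (sot H) B) :=
      (continuous_snd.tendsto (A, B)).mono_left nhdsWithin_le_nhds
    exact sot_tendsto_iff.mp this
  rw [sot_tendsto_iff]
  intro x
  simp only [ContinuousLinearMap.mul_apply]
  have hEff1 : ∀ᶠ q in l, IsEffect (Prod.fst q : H →L[ℂ] H) := hmem.mono fun q h => h.1
  have hb2 : ∀ᶠ q in l, ‖(Prod.snd q : H →L[ℂ] H)‖ ≤ 1 :=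
    hmem.mono fun q h => effect_norm_le_one h.2
  have s1 : Tendsto (fun q : (H →L[ℂ] H) × (H →L[ℂ] H) => sqrtOp q.1 x) l
      (nhds (sqrtOp A x)) := tendsto_sqrtOp hEff1 hA h1 x
  have s2 : Tendsto (fun q : (H →L[ℂ] H) × (H →L[ℂ] H) => q.2 (sqrtOp q.1 x)) l
      (nhds (B (sqrtOp A x))) := tendsto_apply_comp hb2 h2 s1
  have hbs : ∀ᶠ q in l, ‖sqrtOp (Prod.fst q : H →L[ℂ] H)‖ ≤ 1 :=
    hEff1.mono fun q h => sqrt_effect_norm_le h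
  exact tendsto_apply_comp hbs (fun y => tendsto_sqrtOp hEff1 hA h1 y) s2


end
end
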